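/- arXiv:2510.24493 — 4 statements merged into one kernel-verified Lean document; each statement's English description precedes it below -/
import Mathlib

section
/- For every δ > 0 and M > 0 there exists a constant C > 0 such that: whenever the symmetric block matrix R satisfies ‖R‖ ≤ M (operator norm) and Condition (I) holds in the uniform form R₁₁ + δI negative semidefinite and S₁ − δI positive semidefinite, the matrix R is invertible and ‖R⁻¹‖ ≤ C. (This is the paper's claim that Condition (I) implies Assumption (H2): existence and uniform boundedness of R⁻¹.) -/
open Matrix
open scoped Matrix.Norms.L2Operator RealInnerProductSpace

namespace StmtAux

variable {n : Type*} [Fintype n]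

noncomputable def ι (v : n → ℝ) : EuclideanSpace ℝ n :=
  (WithLp.equiv 2 (n → ℝ)).symm v

lemma inner_ι (v w : n → ℝ) : (inner ℝ (ι v) (ι w) : ℝ) = v ⬝ᵥ w := by
  rw [EuclideanSpace.inner_eq_star_dotProduct]; show w ⬝ᵥ star v = _; rw [star_trivial, dotProduct_comm]

lemma ι_sq (v : n → ℝ) : ‖ι v‖ ^ 2 = v ⬝ᵥ v := by
  rw [← inner_ι, real_inner_self_eq_norm_sq]

lemma dot_le (v w : n → ℝ) : v ⬝ᵥ w ≤ ‖ι v‖ * ‖ι w‖ := by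
  rw [← inner_ι]; exact real_inner_le_norm _ _

lemma ι_sum_sq {m : Type*} [Fintype m] (v : n → ℝ) (w : m → ℝ) :
    ‖ι (Sum.elim v w)‖ ^ 2 = ‖ι v‖ ^ 2 + ‖ι w‖ ^ 2 := by
  rw [ι_sq, ι_sq, ι_sq, sumElim_dotProduct_sumElim]

lemma ι_zero : ‖ι (0 : n → ℝ)‖ = 0 := by
  have : ι (0 : n → ℝ) = 0 := rfl
  rw [this, norm_zero]

lemma ι_neg (v : n → ℝ) : ‖ι (-v)‖ = ‖ι v‖ := by
  have : ι (-v) = -(ι v) := rfl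
  rw [this, norm_neg]

lemma ι_add_le (v w : n → ℝ) : ‖ι (v + w)‖ ≤ ‖ι v‖ + ‖ι w‖ := by
  have : ι (v + w) = ι v + ι w := rfl
  rw [this]; exact norm_add_le _ _

lemma ι_sub_le (v w : n → ℝ) : ‖ι (v - w)‖ ≤ ‖ι v‖ + ‖ι w‖ := by
  have : ι (v - w) = ι v - ι w := rfl
  rw [this]; exact norm_sub_le _ _

/-- Lower bound on `mulVec` implies invertibility and a bound on the inverse. -/
lemma inv_of_lower_bound [DecidableEq n] (A : Matrix n n ℝ) (c : ℝ) (hc : 0 < c)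
    (h : ∀ v : n → ℝ, c * ‖ι v‖ ≤ ‖ι (A *ᵥ v)‖) : IsUnit A ∧ ‖A⁻¹‖ ≤ c⁻¹ := by
  have hinj : Function.Injective (A.mulVec) := by
    intro v w hvw
    have h2 : A *ᵥ (v - w) = 0 := by rw [Matrix.mulVec_sub, hvw, sub_self]
    have h3 := h (v - w)
    rw [h2, ι_zero] at h3
    have hn : ‖ι (v - w)‖ = 0 :=
      le_antisymm (by nlinarith [norm_nonneg (ι (v - w))]) (norm_nonneg _)
    have h4 : ι (v - w) = 0 := norm_eq_zero.mp hn
    have h5 : v - w = 0 := by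
      have := congrArg (WithLp.equiv 2 (n → ℝ)) h4
      simpa [ι] using this
    exact sub_eq_zero.mp h5
  have hu : IsUnit A := Matrix.mulVec_injective_iff_isUnit.mp hinj
  refine ⟨hu, ?_⟩
  have hdet : IsUnit A.det := (Matrix.isUnit_iff_isUnit_det A).mp hu
  rw [Matrix.l2_opNorm_def]
  refine ContinuousLinearMap.opNorm_le_bound _ (inv_nonneg.mpr hc.le) fun x => ?_
  set y : n → ℝ := WithLp.equiv 2 (n → ℝ) x with hy
  have hxy : x = ι y := rfl
  have key : A *ᵥ (A⁻¹ *ᵥ y) = y := by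
    rw [Matrix.mulVec_mulVec, Matrix.mul_nonsing_inv A hdet, Matrix.one_mulVec]
  have h6 := h (A⁻¹ *ᵥ y)
  rw [key] at h6
  have hT : ((Matrix.toEuclideanLin.trans LinearMap.toContinuousLinearMap) A⁻¹) x
      = ι (A⁻¹ *ᵥ y) := rfl
  rw [hT, hxy]
  rw [le_inv_mul_iff₀ hc]
  exact h6


lemma le_of_sq_le_sq' {a b : ℝ} (hb : 0 ≤ b) (h : a ^ 2 ≤ b ^ 2) : a ≤ b := by
  nlinarith

lemma opnorm_mulVec {n m : Type*} [Fintype n] [Fintype m] [DecidableEq n] (A : Matrix m n ℝ) (v : n → ℝ) :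
    ‖ι (A *ᵥ v)‖ ≤ ‖A‖ * ‖ι v‖ := by
  have h := Matrix.l2_opNorm_mulVec A (ι v)
  simpa [ι] using h

end StmtAux

open StmtAux

set_option maxHeartbeats 2000000 in
/-- Condition (I) (in uniform form) implies Assumption (H2): for every `δ > 0` and `M > 0`
there is a constant `C > 0` such that whenever the symmetric block matrix
`R = [[R₁₁, R₂₁ᵀ],[R₂₁, R₂₂]]` satisfies `‖R‖ ≤ M` (L² operator norm),
`R₁₁ + δ I` is negative semidefinite and `S₁ - δ I` is positive semidefinite
(where `S₁ = R₂₂ - R₂₁ R₁₁⁻¹ R₂₁ᵀ` is the Schur complement), the matrix `R` is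
invertible and `‖R⁻¹‖ ≤ C`. -/
theorem stmt_0 (k₁ k₂ : ℕ) (hk₁ : 0 < k₁) (hk₂ : 0 < k₂) (δ M : ℝ) (hδ : 0 < δ) (hM : 0 < M) :
    ∃ C : ℝ, 0 < C ∧
      ∀ (R₁₁ : Matrix (Fin k₁) (Fin k₁) ℝ) (R₂₂ : Matrix (Fin k₂) (Fin k₂) ℝ)
        (R₂₁ : Matrix (Fin k₂) (Fin k₁) ℝ),
        R₁₁.IsSymm → R₂₂.IsSymm →
        ∀ (R : Matrix (Fin k₁ ⊕ Fin k₂) (Fin k₁ ⊕ Fin k₂) ℝ),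
          R = Matrix.fromBlocks R₁₁ R₂₁ᵀ R₂₁ R₂₂ →
          ‖R‖ ≤ M →
          (-(R₁₁ + δ • (1 : Matrix (Fin k₁) (Fin k₁) ℝ))).PosSemidef →
          ((R₂₂ - R₂₁ * R₁₁⁻¹ * R₂₁ᵀ) - δ • (1 : Matrix (Fin k₂) (Fin k₂) ℝ)).PosSemidef →
          IsUnit R ∧ ‖R⁻¹‖ ≤ C := by
  classical
  set κ : ℝ := M / δ with hκdef
  have hκ0 : 0 ≤ κ := by positivity
  set c : ℝ := δ / (2 * (1 + κ) ^ 2) with hcdef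
  have hc0 : 0 < c := by positivity
  refine ⟨c⁻¹, by positivity, ?_⟩
  intro A D B hAs hDs R hR hRM hneg hpos
  -- quadratic form bounds
  have hAq : ∀ v : Fin k₁ → ℝ, δ * (v ⬝ᵥ v) ≤ -(v ⬝ᵥ (A *ᵥ v)) := by
    intro v
    have h0 := hneg.dotProduct_mulVec_nonneg v
    simp only [star_trivial, Matrix.neg_mulVec, Matrix.add_mulVec, Matrix.smul_mulVec,
      Matrix.one_mulVec, dotProduct_neg, dotProduct_add, dotProduct_smul,
      smul_eq_mul] at h0
    linarith
  have hSq : ∀ v : Fin k₂ → ℝ, δ * (v ⬝ᵥ v) ≤ v ⬝ᵥ ((D - B * A⁻¹ * Bᵀ) *ᵥ v) := by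
    intro v
    have h0 := hpos.dotProduct_mulVec_nonneg v
    simp only [star_trivial, Matrix.sub_mulVec, Matrix.smul_mulVec, Matrix.one_mulVec,
      dotProduct_sub, dotProduct_smul, smul_eq_mul] at h0 ⊢
    linarith
  -- lower bound for A
  have hAlb : ∀ v : Fin k₁ → ℝ, δ * ‖ι v‖ ≤ ‖ι (A *ᵥ v)‖ := by
    intro v
    have h1 := hAq v
    have h2 : -(v ⬝ᵥ (A *ᵥ v)) ≤ ‖ι v‖ * ‖ι (A *ᵥ v)‖ := by
      have h3 := dot_le v (-(A *ᵥ v))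
      have h4 : v ⬝ᵥ (-(A *ᵥ v)) = -(v ⬝ᵥ (A *ᵥ v)) := dotProduct_neg v _
      rw [h4, ι_neg] at h3
      exact h3
    have h5 : δ * ‖ι v‖ ^ 2 ≤ ‖ι v‖ * ‖ι (A *ᵥ v)‖ := by rw [ι_sq]; linarith
    rcases eq_or_lt_of_le (norm_nonneg (ι v)) with h6 | h6
    · rw [← h6, mul_zero]; exact norm_nonneg _
    · nlinarith
  obtain ⟨hAu, hAinv⟩ := inv_of_lower_bound A δ hδ hAlb
  have hAdet : IsUnit A.det := (Matrix.isUnit_iff_isUnit_det A).mp hAu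
  -- norm of off-diagonal block
  have hB : ∀ v : Fin k₂ → ℝ, ‖ι (Bᵀ *ᵥ v)‖ ≤ M * ‖ι v‖ := by
    intro v
    set z : (Fin k₁ ⊕ Fin k₂) → ℝ := Sum.elim 0 v with hz
    have hz1 : z ∘ Sum.inl = (0 : Fin k₁ → ℝ) := rfl
    have hz2 : z ∘ Sum.inr = v := rfl
    have hRz : R *ᵥ z = Sum.elim (Bᵀ *ᵥ v) (D *ᵥ v) := by
      rw [hR, Matrix.fromBlocks_mulVec, hz1, hz2, Matrix.mulVec_zero, Matrix.mulVec_zero,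
        zero_add, zero_add]
    have hnz : ‖ι z‖ ^ 2 = ‖ι v‖ ^ 2 := by
      rw [hz, ι_sum_sq]
      simp [ι_zero]
    have h1 : ‖ι (R *ᵥ z)‖ ≤ M * ‖ι z‖ := by
      have := opnorm_mulVec R z
      have h2 : ‖R‖ * ‖ι z‖ ≤ M * ‖ι z‖ :=
        mul_le_mul_of_nonneg_right hRM (norm_nonneg _)
      linarith
    have h3 : ‖ι (Bᵀ *ᵥ v)‖ ^ 2 ≤ ‖ι (R *ᵥ z)‖ ^ 2 := by
      rw [hRz, ι_sum_sq]
      nlinarith [sq_nonneg ‖ι (D *ᵥ v)‖]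
    have h4 : ‖ι z‖ ≤ ‖ι v‖ := le_of_sq_le_sq' (norm_nonneg _) (le_of_eq hnz)
    have h5 : ‖ι (Bᵀ *ᵥ v)‖ ≤ ‖ι (R *ᵥ z)‖ :=
      le_of_sq_le_sq' (norm_nonneg _) h3
    calc ‖ι (Bᵀ *ᵥ v)‖ ≤ ‖ι (R *ᵥ z)‖ := h5
      _ ≤ M * ‖ι z‖ := h1
      _ ≤ M * ‖ι v‖ := mul_le_mul_of_nonneg_left h4 hM.le
  -- bound on w
  have hw : ∀ v : Fin k₂ → ℝ, ‖ι (A⁻¹ *ᵥ (Bᵀ *ᵥ v))‖ ≤ κ * ‖ι v‖ := by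
    intro v
    have h1 := opnorm_mulVec A⁻¹ (Bᵀ *ᵥ v)
    have h2 : ‖A⁻¹‖ * ‖ι (Bᵀ *ᵥ v)‖ ≤ δ⁻¹ * (M * ‖ι v‖) := by
      apply mul_le_mul hAinv (hB v) (norm_nonneg _) (by positivity)
    have h3 : δ⁻¹ * (M * ‖ι v‖) = κ * ‖ι v‖ := by
      rw [hκdef]; ring
    linarith
  -- the main lower bound for R
  have hRlb : ∀ x : (Fin k₁ ⊕ Fin k₂) → ℝ, c * ‖ι x‖ ≤ ‖ι (R *ᵥ x)‖ := by
    intro x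
    set x₁ : Fin k₁ → ℝ := x ∘ Sum.inl with hx₁
    set x₂ : Fin k₂ → ℝ := x ∘ Sum.inr with hx₂
    set w : Fin k₁ → ℝ := A⁻¹ *ᵥ (Bᵀ *ᵥ x₂) with hwdef
    set y : Fin k₁ → ℝ := x₁ + w with hydef
    have hx : x = Sum.elim x₁ x₂ := (Sum.elim_comp_inl_inr x).symm
    have hAw : A *ᵥ w = Bᵀ *ᵥ x₂ := by
      rw [hwdef, Matrix.mulVec_mulVec, Matrix.mul_nonsing_inv A hAdet, Matrix.one_mulVec]
    have hRx : R *ᵥ x = Sum.elim (A *ᵥ y) (B *ᵥ x₁ + D *ᵥ x₂) := by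
      rw [hR, Matrix.fromBlocks_mulVec, ← hx₁, ← hx₂, hydef, Matrix.mulVec_add, hAw]
    -- key identity
    have hBw : B *ᵥ w = (B * A⁻¹ * Bᵀ) *ᵥ x₂ := by
      rw [hwdef, Matrix.mulVec_mulVec, Matrix.mulVec_mulVec]
    have hwAy : w ⬝ᵥ (A *ᵥ y) = x₂ ⬝ᵥ (B *ᵥ y) := by
      rw [Matrix.dotProduct_mulVec w A y]
      have h1 : w ᵥ* A = A *ᵥ w := by
        rw [← Matrix.mulVec_transpose, hAs.eq]
      rw [h1, hAw, Matrix.mulVec_transpose, ← Matrix.dotProduct_mulVec]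
    have hx₁y : x₁ = y - w := by rw [hydef]; abel
    have hkey : (Sum.elim (-(y + w)) x₂) ⬝ᵥ (R *ᵥ x)
        = -(y ⬝ᵥ (A *ᵥ y)) + x₂ ⬝ᵥ ((D - B * A⁻¹ * Bᵀ) *ᵥ x₂) := by
      rw [hRx, sumElim_dotProduct_sumElim, neg_dotProduct,
        add_dotProduct, hx₁y, Matrix.mulVec_sub]
      rw [hwAy, hBw]
      simp only [dotProduct_add, dotProduct_sub, Matrix.sub_mulVec]
      ring
    have hq1 := hAq y
    have hq2 := hSq x₂
    have hwb := hw x₂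
    set a := ‖ι y‖ with ha
    set b := ‖ι x₂‖ with hbdef
    set r := ‖ι (R *ᵥ x)‖ with hrdef
    have ha0 : 0 ≤ a := norm_nonneg _
    have hb0 : 0 ≤ b := norm_nonneg _
    have hr0 : 0 ≤ r := norm_nonneg _
    have hdu := dot_le (Sum.elim (-(y + w)) x₂) (R *ᵥ x)
    have hdot : δ * (a ^ 2 + b ^ 2) ≤ ‖ι (Sum.elim (-(y + w)) x₂)‖ * r := by
      have e1 : a ^ 2 = y ⬝ᵥ y := ι_sq y
      have e2 : b ^ 2 = x₂ ⬝ᵥ x₂ := ι_sq x₂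
      rw [hkey] at hdu
      rw [e1, e2]
      linarith
    have hu_le : ‖ι (Sum.elim (-(y + w)) x₂)‖ ≤ a + (1 + κ) * b := by
      have h1 : ‖ι (-(y + w))‖ ≤ a + κ * b := by
        rw [ι_neg]
        have h2 := ι_add_le y w
        linarith [hwb]
      have h2 : ‖ι (Sum.elim (-(y + w)) x₂)‖ ^ 2 ≤ (a + (1 + κ) * b) ^ 2 := by
        rw [ι_sum_sq]
        nlinarith [norm_nonneg (ι (-(y + w)))]
      exact le_of_sq_le_sq' (by nlinarith) h2
    have hX : ‖ι x‖ ≤ a + (1 + κ) * b := by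
      have h1 : ‖ι x₁‖ ≤ a + κ * b := by
        rw [hx₁y]
        have h2 := ι_sub_le y w
        linarith [hwb]
      have h2 : ‖ι x‖ ^ 2 ≤ (a + (1 + κ) * b) ^ 2 := by
        rw [hx, ι_sum_sq]
        nlinarith [norm_nonneg (ι x₁)]
      exact le_of_sq_le_sq' (by nlinarith) h2
    have hone : 1 ≤ (1 + κ) ^ 2 := by nlinarith
    have hs2 : (a + (1 + κ) * b) ^ 2 ≤ 2 * (1 + κ) ^ 2 * (a ^ 2 + b ^ 2) := by
      nlinarith [sq_nonneg ((1 + κ) * a - b), sq_nonneg a, sq_nonneg b, hone]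
    set s := a + (1 + κ) * b with hsdef
    have hs0 : 0 ≤ s := by positivity
    have hdot2 : δ * (a ^ 2 + b ^ 2) ≤ s * r := by
      have h1 := mul_le_mul_of_nonneg_right hu_le hr0
      linarith
    rcases eq_or_lt_of_le hs0 with hseq | hspos
    · have hX0 : ‖ι x‖ = 0 := le_antisymm (by rw [← hseq] at hX; exact hX) (norm_nonneg _)
      rw [hX0, mul_zero]
      exact hr0
    · have h1 : δ * s ^ 2 ≤ 2 * (1 + κ) ^ 2 * (s * r) := by
        nlinarith
      have h2 : δ * s ≤ 2 * (1 + κ) ^ 2 * r := by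
        nlinarith
      have h3 : c * ‖ι x‖ ≤ c * s := mul_le_mul_of_nonneg_left hX hc0.le
      have h4 : c * s ≤ r := by
        rw [hcdef, div_mul_eq_mul_div, div_le_iff₀ (by positivity)]
        nlinarith
      linarith
  obtain ⟨hRu, hRinv⟩ := inv_of_lower_bound R c hc0 hRlb
  exact ⟨hRu, hRinv⟩
end

section
/- Assume Condition (I): R₁₁ ≺ 0 and S₁ ≻ 0. Set u₂* := ψ₂ and u₁* := φ₁(u₂*). Then for all u₁ ∈ ℝ^{k₁} and u₂ ∈ ℝ^{k₂}: f(u₁, u₂*) ≤ f(u₁*, u₂*) ≤ f(φ₁(u₂), u₂), and f(u₁*, u₂*) = −⟨R⁻¹Δ, Δ⟩. (Finite-dimensional form of the explicit–implicit saddle point property of Theorem 1 of the paper.) -/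
open Matrix

/-- Finite-dimensional form of the explicit–implicit saddle point property (Theorem 1 of the
paper): under Condition (I) (`R₁₁ ≺ 0`, `S₁ ≻ 0`), with `u₂* = ψ₂` and `u₁* = φ₁(u₂*)`,
`f(u₁, u₂*) ≤ f(u₁*, u₂*) ≤ f(φ₁(u₂), u₂)` for all `u₁, u₂`, and
`f(u₁*, u₂*) = −⟨R⁻¹Δ, Δ⟩`. -/
theorem stmt_7 (k₁ k₂ : ℕ) (hk₁ : 0 < k₁) (hk₂ : 0 < k₂)
    (R₁₁ : Matrix (Fin k₁) (Fin k₁) ℝ) (R₂₂ : Matrix (Fin k₂) (Fin k₂) ℝ)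
    (R₂₁ : Matrix (Fin k₂) (Fin k₁) ℝ)
    (hR₁₁ : R₁₁.IsSymm) (hR₂₂ : R₂₂.IsSymm)
    (R : Matrix (Fin k₁ ⊕ Fin k₂) (Fin k₁ ⊕ Fin k₂) ℝ)
    (hR : R = Matrix.fromBlocks R₁₁ R₂₁ᵀ R₂₁ R₂₂)
    (S₁ : Matrix (Fin k₂) (Fin k₂) ℝ) (hS₁ : S₁ = R₂₂ - R₂₁ * R₁₁⁻¹ * R₂₁ᵀ)
    (hCondI₁ : (-R₁₁).PosDef) (hCondI₂ : S₁.PosDef)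
    (Δ₁ : Fin k₁ → ℝ) (Δ₂ : Fin k₂ → ℝ) (Δ : Fin k₁ ⊕ Fin k₂ → ℝ)
    (hΔ : Δ = Sum.elim Δ₁ Δ₂)
    (f : (Fin k₁ → ℝ) → (Fin k₂ → ℝ) → ℝ)
    (hf : ∀ u₁ u₂, f u₁ u₂ =
      R.mulVec (Sum.elim u₁ u₂) ⬝ᵥ Sum.elim u₁ u₂ + 2 * (Δ ⬝ᵥ Sum.elim u₁ u₂))
    (φ₁ : (Fin k₂ → ℝ) → (Fin k₁ → ℝ))
    (hφ₁ : ∀ u₂, φ₁ u₂ = -(R₁₁⁻¹.mulVec (R₂₁ᵀ.mulVec u₂ + Δ₁)))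
    (ψ₂ : Fin k₂ → ℝ)
    (hψ₂ : ψ₂ = -(S₁⁻¹.mulVec (Δ₂ - (R₂₁ * R₁₁⁻¹).mulVec Δ₁)))
    (u₁star : Fin k₁ → ℝ) (u₂star : Fin k₂ → ℝ)
    (hu₂star : u₂star = ψ₂) (hu₁star : u₁star = φ₁ u₂star) :
    (∀ (u₁ : Fin k₁ → ℝ) (u₂ : Fin k₂ → ℝ),
      f u₁ u₂star ≤ f u₁star u₂star ∧ f u₁star u₂star ≤ f (φ₁ u₂) u₂)
    ∧ f u₁star u₂star = -(R⁻¹.mulVec Δ ⬝ᵥ Δ) := by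
  -- invertibility facts
  have hR₁₁det : IsUnit R₁₁.det := by
    have h1 : IsUnit (-R₁₁).det := hCondI₁.det_pos.ne'.isUnit
    rw [det_neg, isUnit_iff_ne_zero, mul_ne_zero_iff] at h1
    exact isUnit_iff_ne_zero.mpr h1.2
  have hS₁det : IsUnit S₁.det := hCondI₂.det_pos.ne'.isUnit
  have hR₁₁inv : R₁₁ * R₁₁⁻¹ = 1 := mul_nonsing_inv _ hR₁₁det
  have hS₁inv : S₁ * S₁⁻¹ = 1 := mul_nonsing_inv _ hS₁det
  -- R symmetric
  have hRsymm : Rᵀ = R := by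
    rw [hR, fromBlocks_transpose, transpose_transpose, hR₁₁.eq, hR₂₂.eq]
  set v := Sum.elim u₁star u₂star with hv
  -- the critical point equation
  have h1 : R₁₁ *ᵥ u₁star = -(R₂₁ᵀ *ᵥ u₂star + Δ₁) := by
    rw [hu₁star, hφ₁, mulVec_neg, mulVec_mulVec, hR₁₁inv, one_mulVec]
  have hcrit : R.mulVec v = -Δ := by
    have h2 : R₂₁ *ᵥ u₁star + R₂₂ *ᵥ u₂star = -Δ₂ := by
      have e1 : R₂₁ *ᵥ u₁star
          = -((R₂₁ * R₁₁⁻¹) *ᵥ (R₂₁ᵀ *ᵥ u₂star) + (R₂₁ * R₁₁⁻¹) *ᵥ Δ₁) := by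
        rw [hu₁star, hφ₁, mulVec_neg, mulVec_mulVec, mulVec_add]
      have e2 : S₁ *ᵥ u₂star = -(Δ₂ - (R₂₁ * R₁₁⁻¹) *ᵥ Δ₁) := by
        rw [hu₂star, hψ₂, mulVec_neg, mulVec_mulVec, hS₁inv, one_mulVec]
      have e3 : R₂₂ *ᵥ u₂star = S₁ *ᵥ u₂star + (R₂₁ * R₁₁⁻¹) *ᵥ (R₂₁ᵀ *ᵥ u₂star) := by
        rw [mulVec_mulVec, hS₁, sub_mulVec]
        abel
      rw [e1, e3, e2]
      abel
    rw [hR, hv, hΔ, fromBlocks_mulVec]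
    simp only [Sum.elim_comp_inl, Sum.elim_comp_inr, h1, h2]
    ext (i | i) <;> simp <;> abel
  -- dot product symmetry for R
  have hsym : ∀ a b : Fin k₁ ⊕ Fin k₂ → ℝ, a ⬝ᵥ (R *ᵥ b) = R *ᵥ a ⬝ᵥ b := by
    intro a b
    rw [dotProduct_mulVec, ← mulVec_transpose, hRsymm]
  -- expansion of f around the critical point
  have hexp : ∀ w : Fin k₁ ⊕ Fin k₂ → ℝ,
      R.mulVec (v + w) ⬝ᵥ (v + w) + 2 * (Δ ⬝ᵥ (v + w))
        = (R.mulVec v ⬝ᵥ v + 2 * (Δ ⬝ᵥ v)) + R.mulVec w ⬝ᵥ w := by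
    intro w
    have hc : R *ᵥ w ⬝ᵥ v = (-Δ) ⬝ᵥ w := by
      rw [dotProduct_comm, hsym v w, hcrit]
    rw [mulVec_add, add_dotProduct, dotProduct_add, dotProduct_add, dotProduct_add, hc, hcrit]
    simp only [neg_dotProduct, dotProduct_neg]
    ring
  have hfstar := hf u₁star u₂star
  refine ⟨fun u₁ u₂ => ⟨?_, ?_⟩, ?_⟩
  · -- left inequality
    have hsum : Sum.elim u₁ u₂star = v + Sum.elim (u₁ - u₁star) 0 := by
      ext (i | i) <;>
        simp only [hv, Pi.add_apply, Sum.elim_inl, Sum.elim_inr, Pi.sub_apply,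
          Pi.zero_apply] <;> ring
    have hq : R.mulVec (Sum.elim (u₁ - u₁star) (0 : Fin k₂ → ℝ)) ⬝ᵥ
        Sum.elim (u₁ - u₁star) 0 = R₁₁.mulVec (u₁ - u₁star) ⬝ᵥ (u₁ - u₁star) := by
      rw [hR, fromBlocks_mulVec, sumElim_dotProduct_sumElim]
      simp [Sum.elim_comp_inl, Sum.elim_comp_inr]
    have hle : R₁₁.mulVec (u₁ - u₁star) ⬝ᵥ (u₁ - u₁star) ≤ 0 := by
      have h := hCondI₂.posSemidef
      have h2 := hCondI₁.posSemidef.dotProduct_mulVec_nonneg (u₁ - u₁star)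
      simp only [star_trivial, neg_mulVec, dotProduct_neg] at h2
      rw [dotProduct_comm]
      linarith
    rw [hf u₁ u₂star, hfstar, hsum, hexp, hq]
    linarith
  · -- right inequality
    set w₂ := u₂ - u₂star with hw₂
    set w₁ := φ₁ u₂ - u₁star with hw₁
    have hsum : Sum.elim (φ₁ u₂) u₂ = v + Sum.elim w₁ w₂ := by
      ext (i | i) <;>
        simp only [hv, hw₁, hw₂, Pi.add_apply, Sum.elim_inl, Sum.elim_inr, Pi.sub_apply] <;> ring
    have hw₁' : w₁ = -(R₁₁⁻¹ *ᵥ (R₂₁ᵀ *ᵥ w₂)) := by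
      simp only [hw₁, hw₂, hu₁star, hφ₁, mulVec_sub, mulVec_add, mulVec_neg]
      abel
    have hw₁eq : R₁₁ *ᵥ w₁ = -(R₂₁ᵀ *ᵥ w₂) := by
      rw [hw₁', mulVec_neg, mulVec_mulVec, hR₁₁inv, one_mulVec]
    have hRw₁ : R₂₁ *ᵥ w₁ = -((R₂₁ * R₁₁⁻¹) *ᵥ (R₂₁ᵀ *ᵥ w₂)) := by
      rw [hw₁', mulVec_neg, mulVec_mulVec]
    have hq : R.mulVec (Sum.elim w₁ w₂) ⬝ᵥ Sum.elim w₁ w₂ = S₁.mulVec w₂ ⬝ᵥ w₂ := by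
      rw [hR, fromBlocks_mulVec, sumElim_dotProduct_sumElim]
      simp only [Sum.elim_comp_inl, Sum.elim_comp_inr, hw₁eq, hRw₁, neg_add_cancel,
        zero_dotProduct]
      rw [hS₁, sub_mulVec]
      simp only [← mulVec_mulVec, sub_dotProduct, add_dotProduct, neg_dotProduct]
      ring
    have hge : 0 ≤ S₁.mulVec w₂ ⬝ᵥ w₂ := by
      have := hCondI₂.posSemidef.dotProduct_mulVec_nonneg w₂
      rw [dotProduct_comm]
      simpa using this
    rw [hf (φ₁ u₂) u₂, hfstar, hsum, hexp, hq]
    linarith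
  · -- the value
    have hRdet : IsUnit R.det := by
      have : Invertible R₁₁ := R₁₁.invertibleOfIsUnitDet hR₁₁det
      rw [hR, det_fromBlocks₁₁]
      rw [invOf_eq_nonsing_inv, ← hS₁]
      exact hR₁₁det.mul hS₁det
    have hinvΔ : R⁻¹.mulVec Δ = -v := by
      have hΔ' : Δ = R.mulVec (-v) := by rw [mulVec_neg, hcrit, neg_neg]
      rw [hΔ', mulVec_mulVec, nonsing_inv_mul _ hRdet, one_mulVec]
    rw [hfstar, ← hv, hcrit, hinvΔ]
    simp only [neg_dotProduct, dotProduct_neg]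
    rw [dotProduct_comm Δ v]
    ring
end

section
/- Assume R₁₁ ≺ 0 and R₂₂ ≻ 0 (so R is invertible). Then the quadratic game has a value: inf over u₂ ∈ ℝ^{k₂} of (sup over u₁ ∈ ℝ^{k₁} of f(u₁,u₂)) equals sup over u₁ ∈ ℝ^{k₁} of (inf over u₂ ∈ ℝ^{k₂} of f(u₁,u₂)), and both equal f(−R⁻¹Δ) = −⟨R⁻¹Δ, Δ⟩. -/
open Matrix

private lemma symm_dot {n : Type*} [Fintype n] {M : Matrix n n ℝ} (h : M.IsSymm)
    (x y : n → ℝ) : M *ᵥ x ⬝ᵥ y = M *ᵥ y ⬝ᵥ x := by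
  rw [dotProduct_comm, dotProduct_mulVec, ← mulVec_transpose, h.eq]

private lemma trans_dot {n m : Type*} [Fintype n] [Fintype m] (M : Matrix n m ℝ)
    (x : m → ℝ) (y : n → ℝ) : Mᵀ *ᵥ y ⬝ᵥ x = M *ᵥ x ⬝ᵥ y := by
  rw [mulVec_transpose, ← dotProduct_mulVec, dotProduct_comm]

private def gq {n₁ n₂ : Type*} [Fintype n₁] [Fintype n₂]
    (R₁₁ : Matrix n₁ n₁ ℝ) (R₂₂ : Matrix n₂ n₂ ℝ) (R₂₁ : Matrix n₂ n₁ ℝ)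
    (w₁ : n₁ → ℝ) (w₂ : n₂ → ℝ) : ℝ :=
  R₁₁ *ᵥ w₁ ⬝ᵥ w₁ + 2 * (R₂₁ *ᵥ w₁ ⬝ᵥ w₂) + R₂₂ *ᵥ w₂ ⬝ᵥ w₂

section Aux

variable {n₁ n₂ : Type*} [Fintype n₁] [Fintype n₂]
    (R₁₁ : Matrix n₁ n₁ ℝ) (R₂₂ : Matrix n₂ n₂ ℝ) (R₂₁ : Matrix n₂ n₁ ℝ)

private lemma gq_diff₁ (h11 : R₁₁.IsSymm) (p w₁ : n₁ → ℝ) (w₂ : n₂ → ℝ)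
    (hp : R₁₁ *ᵥ p = -(R₂₁ᵀ *ᵥ w₂)) :
    gq R₁₁ R₂₂ R₂₁ w₁ w₂ =
      gq R₁₁ R₂₂ R₂₁ p w₂ + R₁₁ *ᵥ (w₁ - p) ⬝ᵥ (w₁ - p) := by
  have hw : w₁ = p + (w₁ - p) := by abel
  have e1 : R₁₁ *ᵥ w₁ ⬝ᵥ w₁ =
      R₁₁ *ᵥ p ⬝ᵥ p + 2 * (R₁₁ *ᵥ p ⬝ᵥ (w₁ - p)) + R₁₁ *ᵥ (w₁ - p) ⬝ᵥ (w₁ - p) := by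
    conv_lhs => rw [hw]
    rw [mulVec_add, add_dotProduct, dotProduct_add, dotProduct_add,
      symm_dot h11 (w₁ - p) p]
    ring
  have e2 : R₂₁ *ᵥ w₁ ⬝ᵥ w₂ = R₂₁ *ᵥ p ⬝ᵥ w₂ - R₁₁ *ᵥ p ⬝ᵥ (w₁ - p) := by
    conv_lhs => rw [hw]
    rw [mulVec_add, add_dotProduct, ← trans_dot R₂₁ (w₁ - p) w₂,
      show R₂₁ᵀ *ᵥ w₂ = -(R₁₁ *ᵥ p) by rw [hp, neg_neg], neg_dotProduct]
    ring
  unfold gq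
  linarith [e1, e2]

private lemma gq_val₁ (p : n₁ → ℝ) (w₂ : n₂ → ℝ)
    (hp : R₁₁ *ᵥ p = -(R₂₁ᵀ *ᵥ w₂)) :
    gq R₁₁ R₂₂ R₂₁ p w₂ = -(R₁₁ *ᵥ p ⬝ᵥ p) + R₂₂ *ᵥ w₂ ⬝ᵥ w₂ := by
  have h : R₂₁ *ᵥ p ⬝ᵥ w₂ = -(R₁₁ *ᵥ p ⬝ᵥ p) := by
    rw [← trans_dot R₂₁ p w₂, show R₂₁ᵀ *ᵥ w₂ = -(R₁₁ *ᵥ p) by rw [hp, neg_neg],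
      neg_dotProduct]
  unfold gq
  linarith [h]

private lemma gq_diff₂ (h22 : R₂₂.IsSymm) (q : n₂ → ℝ) (w₁ : n₁ → ℝ) (w₂ : n₂ → ℝ)
    (hq : R₂₂ *ᵥ q = -(R₂₁ *ᵥ w₁)) :
    gq R₁₁ R₂₂ R₂₁ w₁ w₂ =
      gq R₁₁ R₂₂ R₂₁ w₁ q + R₂₂ *ᵥ (w₂ - q) ⬝ᵥ (w₂ - q) := by
  have hw : w₂ = q + (w₂ - q) := by abel
  have e1 : R₂₂ *ᵥ w₂ ⬝ᵥ w₂ =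
      R₂₂ *ᵥ q ⬝ᵥ q + 2 * (R₂₂ *ᵥ q ⬝ᵥ (w₂ - q)) + R₂₂ *ᵥ (w₂ - q) ⬝ᵥ (w₂ - q) := by
    conv_lhs => rw [hw]
    rw [mulVec_add, add_dotProduct, dotProduct_add, dotProduct_add,
      symm_dot h22 (w₂ - q) q]
    ring
  have e2 : R₂₁ *ᵥ w₁ ⬝ᵥ w₂ = R₂₁ *ᵥ w₁ ⬝ᵥ q - R₂₂ *ᵥ q ⬝ᵥ (w₂ - q) := by
    conv_lhs => rw [hw]
    rw [dotProduct_add, show R₂₁ *ᵥ w₁ = -(R₂₂ *ᵥ q) by rw [hq, neg_neg]]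
    rw [neg_dotProduct, neg_dotProduct]
    ring
  unfold gq
  linarith [e1, e2]

private lemma gq_val₂ (q : n₂ → ℝ) (w₁ : n₁ → ℝ)
    (hq : R₂₂ *ᵥ q = -(R₂₁ *ᵥ w₁)) :
    gq R₁₁ R₂₂ R₂₁ w₁ q = R₁₁ *ᵥ w₁ ⬝ᵥ w₁ - R₂₂ *ᵥ q ⬝ᵥ q := by
  have h : R₂₁ *ᵥ w₁ ⬝ᵥ q = -(R₂₂ *ᵥ q ⬝ᵥ q) := by
    rw [show R₂₁ *ᵥ w₁ = -(R₂₂ *ᵥ q) by rw [hq, neg_neg], neg_dotProduct]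
  unfold gq
  linarith [h]

end Aux

/-- If `R₁₁ ≺ 0` and `R₂₂ ≻ 0` then the quadratic game has a value:
`inf_{u₂} sup_{u₁} f(u₁,u₂) = sup_{u₁} inf_{u₂} f(u₁,u₂) = f(−R⁻¹Δ) = −⟨R⁻¹Δ, Δ⟩`. -/
theorem stmt_10 (k₁ k₂ : ℕ) (hk₁ : 0 < k₁) (hk₂ : 0 < k₂)
    (R₁₁ : Matrix (Fin k₁) (Fin k₁) ℝ) (R₂₂ : Matrix (Fin k₂) (Fin k₂) ℝ)
    (R₂₁ : Matrix (Fin k₂) (Fin k₁) ℝ)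
    (hR₁₁ : R₁₁.IsSymm) (hR₂₂ : R₂₂.IsSymm)
    (hneg : (-R₁₁).PosDef) (hpos : R₂₂.PosDef)
    (R : Matrix (Fin k₁ ⊕ Fin k₂) (Fin k₁ ⊕ Fin k₂) ℝ)
    (hR : R = Matrix.fromBlocks R₁₁ R₂₁ᵀ R₂₁ R₂₂)
    (Δ : Fin k₁ ⊕ Fin k₂ → ℝ)
    (f : (Fin k₁ → ℝ) → (Fin k₂ → ℝ) → ℝ)
    (hf : ∀ u₁ u₂, f u₁ u₂ =
      R.mulVec (Sum.elim u₁ u₂) ⬝ᵥ Sum.elim u₁ u₂ + 2 * (Δ ⬝ᵥ Sum.elim u₁ u₂)) :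
    (⨅ u₂ : Fin k₂ → ℝ, ⨆ u₁ : Fin k₁ → ℝ, f u₁ u₂)
        = (⨆ u₁ : Fin k₁ → ℝ, ⨅ u₂ : Fin k₂ → ℝ, f u₁ u₂)
    ∧ (⨅ u₂ : Fin k₂ → ℝ, ⨆ u₁ : Fin k₁ → ℝ, f u₁ u₂)
        = f ((-(R⁻¹.mulVec Δ)) ∘ Sum.inl) ((-(R⁻¹.mulVec Δ)) ∘ Sum.inr)
    ∧ f ((-(R⁻¹.mulVec Δ)) ∘ Sum.inl) ((-(R⁻¹.mulVec Δ)) ∘ Sum.inr)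
        = -(R⁻¹.mulVec Δ ⬝ᵥ Δ) := by
  -- quadratic form facts
  have hq2' : ∀ x : Fin k₂ → ℝ, x ≠ 0 → 0 < R₂₂ *ᵥ x ⬝ᵥ x := by
    intro x hx
    have h := hpos.dotProduct_mulVec_pos hx
    rwa [star_trivial, dotProduct_comm] at h
  have hq2 : ∀ x : Fin k₂ → ℝ, 0 ≤ R₂₂ *ᵥ x ⬝ᵥ x := by
    intro x
    rcases eq_or_ne x 0 with rfl | h
    · simp
    · exact (hq2' x h).le
  have hq1' : ∀ x : Fin k₁ → ℝ, x ≠ 0 → R₁₁ *ᵥ x ⬝ᵥ x < 0 := by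
    intro x hx
    have h := hneg.dotProduct_mulVec_pos hx
    rw [star_trivial, neg_mulVec, dotProduct_neg, dotProduct_comm] at h
    linarith
  have hq1 : ∀ x : Fin k₁ → ℝ, R₁₁ *ᵥ x ⬝ᵥ x ≤ 0 := by
    intro x
    rcases eq_or_ne x 0 with rfl | h
    · simp
    · exact (hq1' x h).le
  -- determinants
  have h11det : IsUnit R₁₁.det := by
    rw [isUnit_iff_ne_zero]
    intro h0
    obtain ⟨v, hv0, hv⟩ := Matrix.exists_mulVec_eq_zero_iff.2 h0
    have := hq1' v hv0
    rw [hv] at this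
    simp at this
  have h22det : IsUnit R₂₂.det := by
    rw [isUnit_iff_ne_zero]
    intro h0
    obtain ⟨v, hv0, hv⟩ := Matrix.exists_mulVec_eq_zero_iff.2 h0
    have := hq2' v hv0
    rw [hv] at this
    simp at this
  have hRdet : IsUnit R.det := by
    rw [isUnit_iff_ne_zero]
    intro h0
    obtain ⟨v, hv0, hv⟩ := Matrix.exists_mulVec_eq_zero_iff.2 h0
    rw [hR, fromBlocks_mulVec] at hv
    have h1 : R₁₁ *ᵥ (v ∘ Sum.inl) + R₂₁ᵀ *ᵥ (v ∘ Sum.inr) = 0 :=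
      funext fun i => congrFun hv (Sum.inl i)
    have h2 : R₂₁ *ᵥ (v ∘ Sum.inl) + R₂₂ *ᵥ (v ∘ Sum.inr) = 0 :=
      funext fun i => congrFun hv (Sum.inr i)
    have e1 : R₁₁ *ᵥ (v ∘ Sum.inl) ⬝ᵥ (v ∘ Sum.inl)
        + R₂₁ᵀ *ᵥ (v ∘ Sum.inr) ⬝ᵥ (v ∘ Sum.inl) = 0 := by
      rw [← add_dotProduct, h1, zero_dotProduct]
    have e2 : R₂₁ *ᵥ (v ∘ Sum.inl) ⬝ᵥ (v ∘ Sum.inr)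
        + R₂₂ *ᵥ (v ∘ Sum.inr) ⬝ᵥ (v ∘ Sum.inr) = 0 := by
      rw [← add_dotProduct, h2, zero_dotProduct]
    have ht := trans_dot R₂₁ (v ∘ Sum.inl) (v ∘ Sum.inr)
    have hab : R₁₁ *ᵥ (v ∘ Sum.inl) ⬝ᵥ (v ∘ Sum.inl)
        = R₂₂ *ᵥ (v ∘ Sum.inr) ⬝ᵥ (v ∘ Sum.inr) := by linarith
    have h1z : v ∘ Sum.inl = 0 := by
      by_contra h
      have := hq1' _ h
      have := hq2 (v ∘ Sum.inr)
      linarith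
    have h2z : v ∘ Sum.inr = 0 := by
      by_contra h
      have := hq2' _ h
      have := hq1 (v ∘ Sum.inl)
      linarith
    exact hv0 (funext fun i =>
      Sum.casesOn i (fun i => congrFun h1z i) (fun i => congrFun h2z i))
  have hRsymm : R.IsSymm := by
    rw [Matrix.IsSymm, hR, fromBlocks_transpose, transpose_transpose, hR₁₁.eq, hR₂₂.eq]
  set ustar : Fin k₁ ⊕ Fin k₂ → ℝ := -(R⁻¹ *ᵥ Δ) with hustar
  set us₁ : Fin k₁ → ℝ := ustar ∘ Sum.inl with hus₁
  set us₂ : Fin k₂ → ℝ := ustar ∘ Sum.inr with hus₂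
  set c : ℝ := -(R⁻¹ *ᵥ Δ ⬝ᵥ Δ) with hc
  have hstar : R *ᵥ ustar = -Δ := by
    rw [hustar, mulVec_neg, mulVec_mulVec, Matrix.mul_nonsing_inv _ hRdet, one_mulVec]
  have hdc : Δ ⬝ᵥ ustar = c := by
    rw [hustar, dotProduct_neg, hc, dotProduct_comm]
  have hexpand : ∀ w : Fin k₁ ⊕ Fin k₂ → ℝ,
      R *ᵥ (ustar + w) ⬝ᵥ (ustar + w) + 2 * (Δ ⬝ᵥ (ustar + w)) = R *ᵥ w ⬝ᵥ w + c := by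
    intro w
    have h1 : R *ᵥ w ⬝ᵥ ustar = (-Δ) ⬝ᵥ w := by rw [symm_dot hRsymm, hstar]
    rw [mulVec_add, add_dotProduct, dotProduct_add, dotProduct_add, hstar, h1,
      dotProduct_add, neg_dotProduct, neg_dotProduct, hdc]
    ring
  have hQ : ∀ (w₁ : Fin k₁ → ℝ) (w₂ : Fin k₂ → ℝ),
      R *ᵥ Sum.elim w₁ w₂ ⬝ᵥ Sum.elim w₁ w₂ = gq R₁₁ R₂₂ R₂₁ w₁ w₂ := by
    intro w₁ w₂
    rw [hR, fromBlocks_mulVec]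
    simp only [Sum.elim_comp_inl, Sum.elim_comp_inr, sumElim_dotProduct_sumElim]
    rw [add_dotProduct, add_dotProduct, trans_dot R₂₁ w₁ w₂]
    unfold gq
    ring
  have helim : ∀ (u₁ : Fin k₁ → ℝ) (u₂ : Fin k₂ → ℝ),
      Sum.elim u₁ u₂ = ustar + Sum.elim (u₁ - us₁) (u₂ - us₂) := by
    intro u₁ u₂
    funext i
    cases i with
    | inl i =>
        simp only [Sum.elim_inl, Pi.add_apply, Pi.sub_apply, hus₁, Function.comp_apply]
        ring
    | inr i =>
        simp only [Sum.elim_inr, Pi.add_apply, Pi.sub_apply, hus₂, Function.comp_apply]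
        ring
  have hfg : ∀ u₁ u₂, f u₁ u₂ = gq R₁₁ R₂₂ R₂₁ (u₁ - us₁) (u₂ - us₂) + c := by
    intro u₁ u₂
    rw [hf, helim, hexpand, hQ]
  have hfstar : f us₁ us₂ = c := by
    rw [hfg]
    simp [gq]
  -- the sup side (maximize over u₁)
  set P : (Fin k₂ → ℝ) → (Fin k₁ → ℝ) :=
    fun u₂ => R₁₁⁻¹ *ᵥ (-(R₂₁ᵀ *ᵥ (u₂ - us₂))) with hP
  have hPe : ∀ u₂, R₁₁ *ᵥ P u₂ = -(R₂₁ᵀ *ᵥ (u₂ - us₂)) := by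
    intro u₂
    rw [hP, mulVec_mulVec, Matrix.mul_nonsing_inv _ h11det, one_mulVec]
  have hle₁ : ∀ u₂ u₁, f u₁ u₂ ≤ gq R₁₁ R₂₂ R₂₁ (P u₂) (u₂ - us₂) + c := by
    intro u₂ u₁
    rw [hfg, gq_diff₁ R₁₁ R₂₂ R₂₁ hR₁₁ (P u₂) (u₁ - us₁) (u₂ - us₂) (hPe u₂)]
    have := hq1 (u₁ - us₁ - P u₂)
    linarith
  have hat₁ : ∀ u₂, f (us₁ + P u₂) u₂ = gq R₁₁ R₂₂ R₂₁ (P u₂) (u₂ - us₂) + c := by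
    intro u₂
    rw [hfg, add_sub_cancel_left]
  have key₁ : ∀ u₂, (⨆ u₁, f u₁ u₂) = gq R₁₁ R₂₂ R₂₁ (P u₂) (u₂ - us₂) + c := by
    intro u₂
    refine le_antisymm (ciSup_le (hle₁ u₂)) ?_
    rw [← hat₁ u₂]
    exact le_ciSup ⟨gq R₁₁ R₂₂ R₂₁ (P u₂) (u₂ - us₂) + c, by
      rintro x ⟨u₁, rfl⟩; exact hle₁ u₂ u₁⟩ (us₁ + P u₂)
  have hvge : ∀ u₂, c ≤ (⨆ u₁, f u₁ u₂) := by
    intro u₂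
    rw [key₁ u₂, gq_val₁ R₁₁ R₂₂ R₂₁ (P u₂) (u₂ - us₂) (hPe u₂)]
    have := hq1 (P u₂)
    have := hq2 (u₂ - us₂)
    linarith
  have hvat : (⨆ u₁, f u₁ us₂) = c := by
    rw [key₁ us₂]
    have h0 : P us₂ = 0 := by simp [hP]
    rw [h0]
    simp [gq]
  have h1 : (⨅ u₂, ⨆ u₁, f u₁ u₂) = c := by
    refine le_antisymm ?_ (le_ciInf hvge)
    rw [← hvat]
    exact ciInf_le ⟨c, by rintro x ⟨u₂, rfl⟩; exact hvge u₂⟩ us₂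
  -- the inf side (minimize over u₂)
  set N : (Fin k₁ → ℝ) → (Fin k₂ → ℝ) :=
    fun u₁ => R₂₂⁻¹ *ᵥ (-(R₂₁ *ᵥ (u₁ - us₁))) with hN
  have hNe : ∀ u₁, R₂₂ *ᵥ N u₁ = -(R₂₁ *ᵥ (u₁ - us₁)) := by
    intro u₁
    rw [hN, mulVec_mulVec, Matrix.mul_nonsing_inv _ h22det, one_mulVec]
  have hle₂ : ∀ u₁ u₂, gq R₁₁ R₂₂ R₂₁ (u₁ - us₁) (N u₁) + c ≤ f u₁ u₂ := by
    intro u₁ u₂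
    rw [hfg, gq_diff₂ R₁₁ R₂₂ R₂₁ hR₂₂ (N u₁) (u₁ - us₁) (u₂ - us₂) (hNe u₁)]
    have := hq2 (u₂ - us₂ - N u₁)
    linarith
  have hat₂ : ∀ u₁, f u₁ (us₂ + N u₁) = gq R₁₁ R₂₂ R₂₁ (u₁ - us₁) (N u₁) + c := by
    intro u₁
    rw [hfg, add_sub_cancel_left]
  have key₂ : ∀ u₁, (⨅ u₂, f u₁ u₂) = gq R₁₁ R₂₂ R₂₁ (u₁ - us₁) (N u₁) + c := by
    intro u₁
    refine le_antisymm ?_ (le_ciInf (hle₂ u₁))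
    rw [← hat₂ u₁]
    exact ciInf_le ⟨gq R₁₁ R₂₂ R₂₁ (u₁ - us₁) (N u₁) + c, by
      rintro x ⟨u₂, rfl⟩; exact hle₂ u₁ u₂⟩ (us₂ + N u₁)
  have hvle : ∀ u₁, (⨅ u₂, f u₁ u₂) ≤ c := by
    intro u₁
    rw [key₂ u₁, gq_val₂ R₁₁ R₂₂ R₂₁ (N u₁) (u₁ - us₁) (hNe u₁)]
    have := hq1 (u₁ - us₁)
    have := hq2 (N u₁)
    linarith
  have hvat₂ : (⨅ u₂, f us₁ u₂) = c := by
    rw [key₂ us₁]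
    have h0 : N us₁ = 0 := by simp [hN]
    rw [h0]
    simp [gq]
  have h2 : (⨆ u₁, ⨅ u₂, f u₁ u₂) = c := by
    refine le_antisymm (ciSup_le hvle) ?_
    rw [← hvat₂]
    exact le_ciSup ⟨c, by rintro x ⟨u₁, rfl⟩; exact hvle u₁⟩ us₁
  exact ⟨h1.trans h2.symm, h1.trans hfstar.symm, hfstar⟩
end

section
/- Let T > 0, δ > 0, M > 0. Let R : [0,T] → ℝ^{k×k} be measurable with R(t) symmetric, ‖R(t)‖ ≤ M, and in block form R(t) = [[R₁₁(t), R₂₁(t)ᵀ],[R₂₁(t), R₂₂(t)]] satisfying R₁₁(t) + δI negative semidefinite and S₁(t) − δI positive semidefinite for a.e. t ∈ [0,T], where S₁(t) := R₂₂(t) − R₂₁(t)R₁₁(t)⁻¹R₂₁(t)ᵀ. Let Δ = (Δ₁, Δ₂) ∈ L²(0,T; ℝ^k). Then R(t) is invertible for a.e. t, the function u*(t) := −R(t)⁻¹Δ(t) belongs to L²(0,T; ℝ^k), and, writing u* = (u₁*, u₂*), the functional F(u₁,u₂) := ∫₀ᵀ (⟨R(t)u(t), u(t)⟩ + 2⟨Δ(t),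 u(t)⟩) dt satisfies: for every u₁ ∈ L²(0,T; ℝ^{k₁}) and u₂ ∈ L²(0,T; ℝ^{k₂}), F(u₁, u₂*) ≤ F(u₁*, u₂*) ≤ F(t ↦ −R₁₁(t)⁻¹(R₂₁(t)ᵀu₂(t) + Δ₁(t)), u₂), and F(u₁*, u₂*) = −∫₀ᵀ ⟨R(t)⁻¹Δ(t), Δ(t)⟩ dt. (Deterministic L² form of the saddle point property established in the completion-of-squares argument of Section 5 and in Theorem 1 of the paper.) -/
open Matrix MeasureTheory
open scoped Matrix.Norms.L2Operator

set_option linter.unusedSectionVars false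
namespace Stmt17Aux

variable {ι κ τ : Type*} [Fintype ι] [Fintype κ] [Fintype τ]

/-- squared-sum vector bound predicate -/
def VB (C : ℝ) (A : Matrix ι κ ℝ) : Prop :=
  ∀ x : κ → ℝ, ∑ i, (A *ᵥ x) i ^ 2 ≤ C * ∑ j, x j ^ 2

lemma sq_sum_nonneg (x : κ → ℝ) : (0:ℝ) ≤ ∑ j, x j ^ 2 :=
  Finset.sum_nonneg fun _ _ => sq_nonneg _

lemma VB.mul {C₁ C₂ : ℝ} {A : Matrix ι κ ℝ} {B : Matrix κ τ ℝ} (hA : VB C₁ A) (hB : VB C₂ B)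
    (hC : 0 ≤ C₁) : VB (C₁ * C₂) (A * B) := by
  intro x
  rw [← Matrix.mulVec_mulVec]
  calc ∑ i, (A *ᵥ (B *ᵥ x)) i ^ 2 ≤ C₁ * ∑ j, (B *ᵥ x) j ^ 2 := hA _
    _ ≤ C₁ * (C₂ * ∑ j, x j ^ 2) := by
        exact mul_le_mul_of_nonneg_left (hB x) hC
    _ = C₁ * C₂ * ∑ j, x j ^ 2 := by ring

lemma VB.one [DecidableEq ι] : VB 1 (1 : Matrix ι ι ℝ) := by
  intro x; simp [Matrix.one_mulVec]

lemma VB.zero : VB 0 (0 : Matrix ι κ ℝ) := by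
  intro x; simp [Matrix.zero_mulVec]

lemma VB.neg {C : ℝ} {A : Matrix ι κ ℝ} (hA : VB C A) : VB C (-A) := by
  intro x; simpa [Matrix.neg_mulVec] using hA x

lemma VB.add {C₁ C₂ : ℝ} {A B : Matrix ι κ ℝ} (hA : VB C₁ A) (hB : VB C₂ B) :
    VB (2 * (C₁ + C₂)) (A + B) := by
  intro x
  have h1 := hA x
  have h2 := hB x
  have : ∑ i, ((A + B) *ᵥ x) i ^ 2 ≤ 2 * ∑ i, (A *ᵥ x) i ^ 2 + 2 * ∑ i, (B *ᵥ x) i ^ 2 := by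
    rw [Finset.mul_sum, Finset.mul_sum, ← Finset.sum_add_distrib]
    refine Finset.sum_le_sum fun i _ => ?_
    rw [Matrix.add_mulVec]
    simp only [Pi.add_apply]
    nlinarith [sq_nonneg ((A *ᵥ x) i - (B *ᵥ x) i)]
  nlinarith

lemma VB.sub {C₁ C₂ : ℝ} {A B : Matrix ι κ ℝ} (hA : VB C₁ A) (hB : VB C₂ B) :
    VB (2 * (C₁ + C₂)) (A - B) := by
  rw [sub_eq_add_neg]; exact hA.add hB.neg

lemma VB.fromBlocks {C₁ C₂ C₃ C₄ : ℝ} {A : Matrix ι ι ℝ} {B : Matrix ι κ ℝ}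
    {C : Matrix κ ι ℝ} {D : Matrix κ κ ℝ}
    (hA : VB C₁ A) (hB : VB C₂ B) (hC : VB C₃ C) (hD : VB C₄ D)
    (hC₁ : 0 ≤ C₁) (hC₂ : 0 ≤ C₂) (hC₃ : 0 ≤ C₃) (hC₄ : 0 ≤ C₄) :
    VB (2 * (C₁ + C₂ + C₃ + C₄)) (Matrix.fromBlocks A B C D) := by
  intro x
  have hx : x = Sum.elim (x ∘ Sum.inl) (x ∘ Sum.inr) := (Sum.elim_comp_inl_inr x).symm
  set x₁ := x ∘ Sum.inl
  set x₂ := x ∘ Sum.inr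
  rw [hx, Matrix.fromBlocks_mulVec, Fintype.sum_sum_type, Fintype.sum_sum_type]
  simp only [Sum.elim_inl, Sum.elim_inr, Sum.elim_comp_inl, Sum.elim_comp_inr]
  have e1 : ∑ i, (A *ᵥ x₁ + B *ᵥ x₂) i ^ 2
      ≤ 2 * (C₁ * ∑ j, x₁ j ^ 2) + 2 * (C₂ * ∑ j, x₂ j ^ 2) := by
    have h1 := hA x₁; have h2 := hB x₂
    have : ∑ i, (A *ᵥ x₁ + B *ᵥ x₂) i ^ 2
        ≤ 2 * ∑ i, (A *ᵥ x₁) i ^ 2 + 2 * ∑ i, (B *ᵥ x₂) i ^ 2 := by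
      rw [Finset.mul_sum, Finset.mul_sum, ← Finset.sum_add_distrib]
      refine Finset.sum_le_sum fun i _ => ?_
      simp only [Pi.add_apply]
      nlinarith [sq_nonneg ((A *ᵥ x₁) i - (B *ᵥ x₂) i)]
    nlinarith
  have e2 : ∑ i, (C *ᵥ x₁ + D *ᵥ x₂) i ^ 2
      ≤ 2 * (C₃ * ∑ j, x₁ j ^ 2) + 2 * (C₄ * ∑ j, x₂ j ^ 2) := by
    have h1 := hC x₁; have h2 := hD x₂
    have : ∑ i, (C *ᵥ x₁ + D *ᵥ x₂) i ^ 2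
        ≤ 2 * ∑ i, (C *ᵥ x₁) i ^ 2 + 2 * ∑ i, (D *ᵥ x₂) i ^ 2 := by
      rw [Finset.mul_sum, Finset.mul_sum, ← Finset.sum_add_distrib]
      refine Finset.sum_le_sum fun i _ => ?_
      simp only [Pi.add_apply]
      nlinarith [sq_nonneg ((C *ᵥ x₁) i - (D *ᵥ x₂) i)]
    nlinarith
  have n1 : (0:ℝ) ≤ ∑ j, x₁ j ^ 2 := sq_sum_nonneg _
  have n2 : (0:ℝ) ≤ ∑ j, x₂ j ^ 2 := sq_sum_nonneg _
  nlinarith [mul_nonneg hC₁ n2, mul_nonneg hC₂ n1, mul_nonneg hC₃ n2, mul_nonneg hC₄ n1]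


section Square
variable [DecidableEq ι]

/-- Cauchy-Schwarz for dotProduct, squared. -/
lemma dot_sq_le (x y : ι → ℝ) : (x ⬝ᵥ y) ^ 2 ≤ (∑ i, x i ^ 2) * ∑ i, y i ^ 2 := by
  simpa [dotProduct] using Finset.sum_mul_sq_le_sq_mul_sq Finset.univ x y

/-- coercivity from shifted PSD -/
lemma coercive_of_shift {δ : ℝ} {A : Matrix ι ι ℝ}
    (h : (A - δ • (1 : Matrix ι ι ℝ)).PosSemidef) :
    ∀ x : ι → ℝ, δ * ∑ i, x i ^ 2 ≤ x ⬝ᵥ (A *ᵥ x) := by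
  intro x
  have h2 := h.dotProduct_mulVec_nonneg x
  have hs : star x = x := by simp
  rw [hs, Matrix.sub_mulVec, Matrix.smul_mulVec, Matrix.one_mulVec,
    dotProduct_sub, dotProduct_smul] at h2
  have hxx : x ⬝ᵥ x = ∑ i, x i ^ 2 := by
    simp [dotProduct, sq]
  rw [hxx] at h2
  simpa [smul_eq_mul] using h2

lemma posDef_of_coercive {δ : ℝ} (hδ : 0 < δ) {A : Matrix ι ι ℝ} (hA : A.IsHermitian)
    (h : ∀ x : ι → ℝ, δ * ∑ i, x i ^ 2 ≤ x ⬝ᵥ (A *ᵥ x)) : A.PosDef := by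
  refine PosDef.of_dotProduct_mulVec_pos hA fun x hx => ?_
  have hs : star x = x := by simp
  rw [hs]
  refine lt_of_lt_of_le ?_ (h x)
  have hsum : (0:ℝ) < ∑ i, x i ^ 2 := by
    obtain ⟨i, hi⟩ := Function.ne_iff.mp hx
    refine Finset.sum_pos' (fun j _ => sq_nonneg _) ⟨i, Finset.mem_univ i, (sq_nonneg _).lt_of_ne (Ne.symm (pow_ne_zero 2 hi))⟩
  positivity


lemma isHermitian_of_isSymm {A : Matrix ι ι ℝ} (h : A.IsSymm) : A.IsHermitian := by
  rw [Matrix.IsHermitian, Matrix.conjTranspose_eq_transpose_of_trivial]; exact h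

lemma vb_inv {δ : ℝ} (hδ : 0 < δ) {A : Matrix ι ι ℝ} (hdet : IsUnit A.det)
    (hc : ∀ y : ι → ℝ, δ * ∑ i, y i ^ 2 ≤ |y ⬝ᵥ (A *ᵥ y)|) : VB (1/δ^2) A⁻¹ := by
  intro x
  set y := A⁻¹ *ᵥ x with hy
  have hAy : A *ᵥ y = x := by
    rw [hy, Matrix.mulVec_mulVec, Matrix.mul_nonsing_inv _ hdet, Matrix.one_mulVec]
  have h1 : (δ * ∑ i, y i ^ 2)^2 ≤ (∑ i, x i ^ 2) * ∑ i, y i ^ 2 := by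
    calc (δ * ∑ i, y i ^ 2)^2 ≤ |y ⬝ᵥ (A *ᵥ y)|^2 := by
          have h2 := hc y
          nlinarith [abs_nonneg (y ⬝ᵥ (A *ᵥ y)), mul_nonneg hδ.le (sq_sum_nonneg y)]
      _ = (y ⬝ᵥ (A *ᵥ y))^2 := sq_abs _
      _ = ((A *ᵥ y) ⬝ᵥ y)^2 := by rw [dotProduct_comm]
      _ ≤ (∑ i, (A *ᵥ y) i ^ 2) * ∑ i, y i ^ 2 := dot_sq_le _ _
      _ = (∑ i, x i ^ 2) * ∑ i, y i ^ 2 := by rw [hAy]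
  have hx2 : (0:ℝ) ≤ ∑ i, x i ^ 2 := sq_sum_nonneg _
  rcases eq_or_lt_of_le (sq_sum_nonneg y) with h0 | h0
  · rw [← h0]; positivity
  · rw [div_mul_eq_mul_div, le_div_iff₀ (by positivity)]
    nlinarith

end Square

lemma VB.mono {C C' : ℝ} {A : Matrix ι κ ℝ} (h : VB C A) (hle : C ≤ C') : VB C' A :=
  fun x => le_trans (h x) (mul_le_mul_of_nonneg_right hle (sq_sum_nonneg x))

lemma vb_of_opNorm_le [DecidableEq ι] [DecidableEq κ] {A : Matrix ι κ ℝ} {M : ℝ} (h : ‖A‖ ≤ M) (hM : 0 ≤ M) : VB (M^2) A := by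
  intro x
  have h2 := Matrix.l2_opNorm_mulVec A ((EuclideanSpace.equiv κ ℝ).symm x)
  have hx : ‖(EuclideanSpace.equiv κ ℝ).symm x‖ = Real.sqrt (∑ j, x j ^ 2) := by
    rw [EuclideanSpace.norm_eq]
    congr 1
    refine Finset.sum_congr rfl fun j _ => ?_
    simp [Real.norm_eq_abs, sq_abs]
  have hAx : ‖(EuclideanSpace.equiv ι ℝ).symm (A *ᵥ ((EuclideanSpace.equiv κ ℝ).symm x))‖
      = Real.sqrt (∑ i, (A *ᵥ x) i ^ 2) := by
    rw [EuclideanSpace.norm_eq]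
    congr 1
    refine Finset.sum_congr rfl fun i _ => ?_
    simp [Real.norm_eq_abs, sq_abs]
  rw [hAx, hx] at h2
  have h3 : Real.sqrt (∑ i, (A *ᵥ x) i ^ 2) ≤ M * Real.sqrt (∑ j, x j ^ 2) :=
    h2.trans (mul_le_mul_of_nonneg_right (le_trans h (le_refl M)) (Real.sqrt_nonneg _))
  have h4 := Real.sq_sqrt (sq_sum_nonneg (fun i => (A *ᵥ x) i))
  nlinarith [Real.sqrt_nonneg (∑ i, (A *ᵥ x) i ^ 2), Real.sqrt_nonneg (∑ j, x j ^ 2),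
    Real.sq_sqrt (sq_sum_nonneg x)]

noncomputable def CRconst (d M : ℝ) : ℝ :=
  (2*(1 + (1/d^2*M^2) + 0 + 1)) * ((2*((1/d^2) + 0 + 0 + (1/d^2))) * (2*(1 + 0 + (M^2*(1/d^2)) + 1)))

section Main
variable [DecidableEq ι] [DecidableEq κ]

lemma herm_smul_one {c : ℝ} : (c • (1 : Matrix ι ι ℝ)).IsHermitian := by
  simp [Matrix.IsHermitian, Matrix.conjTranspose_smul]

lemma pointwise_main {δ M : ℝ} (hδ : 0 < δ) (hM : 0 < M)
    {A : Matrix ι ι ℝ} {C : Matrix κ ι ℝ} {D : Matrix κ κ ℝ}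
    (hneg : (-(A + δ • (1 : Matrix ι ι ℝ))).PosSemidef)
    (hpos : ((D - C * A⁻¹ * Cᵀ) - δ • (1 : Matrix κ κ ℝ)).PosSemidef)
    (hb : VB (M^2) (Matrix.fromBlocks A Cᵀ C D)) :
    IsUnit A.det ∧ VB (1/δ^2) A⁻¹ ∧ VB (M^2) Cᵀ
    ∧ IsUnit (Matrix.fromBlocks A Cᵀ C D).det
    ∧ VB (CRconst δ M) (Matrix.fromBlocks A Cᵀ C D)⁻¹ := by
  set S := D - C * A⁻¹ * Cᵀ with hS
  -- block VB bounds
  have vbA : VB (M^2) A := by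
    intro x
    have h := hb (Sum.elim x (0 : κ → ℝ))
    rw [Matrix.fromBlocks_mulVec, Fintype.sum_sum_type] at h
    simp only [Sum.elim_comp_inl, Sum.elim_comp_inr, Matrix.mulVec_zero, add_zero,
      Sum.elim_inl, Sum.elim_inr] at h
    rw [Fintype.sum_sum_type] at h
    simp only [Sum.elim_inl, Sum.elim_inr, Pi.zero_apply] at h
    have := sq_sum_nonneg (C *ᵥ x)
    simp only [ne_eq, OfNat.ofNat_ne_zero, not_false_eq_true, zero_pow,
      Finset.sum_const_zero, add_zero] at h
    linarith
  have vbC : VB (M^2) C := by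
    intro x
    have h := hb (Sum.elim x (0 : κ → ℝ))
    rw [Matrix.fromBlocks_mulVec, Fintype.sum_sum_type] at h
    simp only [Sum.elim_comp_inl, Sum.elim_comp_inr, Matrix.mulVec_zero, add_zero,
      Sum.elim_inl, Sum.elim_inr] at h
    rw [Fintype.sum_sum_type] at h
    simp only [Sum.elim_inl, Sum.elim_inr, Pi.zero_apply] at h
    have := sq_sum_nonneg (A *ᵥ x)
    simp only [ne_eq, OfNat.ofNat_ne_zero, not_false_eq_true, zero_pow,
      Finset.sum_const_zero, add_zero] at h
    linarith
  have vbCt : VB (M^2) Cᵀ := by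
    intro x
    have h := hb (Sum.elim (0 : ι → ℝ) x)
    rw [Matrix.fromBlocks_mulVec, Fintype.sum_sum_type] at h
    simp only [Sum.elim_comp_inl, Sum.elim_comp_inr, Matrix.mulVec_zero, zero_add,
      Sum.elim_inl, Sum.elim_inr] at h
    rw [Fintype.sum_sum_type] at h
    simp only [Sum.elim_inl, Sum.elim_inr, Pi.zero_apply] at h
    have := sq_sum_nonneg (D *ᵥ x)
    simp only [ne_eq, OfNat.ofNat_ne_zero, not_false_eq_true, zero_pow,
      Finset.sum_const_zero, zero_add] at h
    linarith
  -- coercivity of -A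
  have hnegA : ∀ x : ι → ℝ, δ * ∑ i, x i ^ 2 ≤ x ⬝ᵥ ((-A) *ᵥ x) := by
    have : ((-A) - δ • (1 : Matrix ι ι ℝ)).PosSemidef := by
      have : (-A) - δ • (1 : Matrix ι ι ℝ) = -(A + δ • 1) := by abel
      rw [this]; exact hneg
    exact coercive_of_shift this
  have hAherm : (-A : Matrix ι ι ℝ).IsHermitian := by
    have h1 := hneg.1
    have : (-A : Matrix ι ι ℝ) = (-(A + δ • 1)) + δ • (1 : Matrix ι ι ℝ) := by abel
    rw [this]
    exact h1.add herm_smul_one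
  have hnegAposdef : (-A : Matrix ι ι ℝ).PosDef := posDef_of_coercive hδ hAherm hnegA
  have hAdet : IsUnit A.det := by
    have h1 : (0:ℝ) < (-A).det := hnegAposdef.det_pos
    rw [Matrix.det_neg] at h1
    refine isUnit_iff_ne_zero.mpr fun h0 => ?_
    rw [h0, mul_zero] at h1; exact lt_irrefl _ h1
  have hAabs : ∀ y : ι → ℝ, δ * ∑ i, y i ^ 2 ≤ |y ⬝ᵥ (A *ᵥ y)| := by
    intro y
    have h1 := hnegA y
    rw [Matrix.neg_mulVec, dotProduct_neg] at h1
    calc δ * ∑ i, y i ^ 2 ≤ -(y ⬝ᵥ (A *ᵥ y)) := h1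
      _ ≤ |y ⬝ᵥ (A *ᵥ y)| := neg_le_abs _
  have vbAinv : VB (1/δ^2) A⁻¹ := vb_inv hδ hAdet hAabs
  -- coercivity of S
  have hScoer : ∀ x : κ → ℝ, δ * ∑ i, x i ^ 2 ≤ x ⬝ᵥ (S *ᵥ x) := coercive_of_shift hpos
  have hSherm : S.IsHermitian := by
    have h1 := hpos.1
    have : S = (S - δ • (1 : Matrix κ κ ℝ)) + δ • (1 : Matrix κ κ ℝ) := by abel
    rw [this]
    exact h1.add herm_smul_one
  have hSposdef : S.PosDef := posDef_of_coercive hδ hSherm hScoer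
  have hSdet : IsUnit S.det := isUnit_iff_ne_zero.mpr (ne_of_gt hSposdef.det_pos)
  have hSabs : ∀ y : κ → ℝ, δ * ∑ i, y i ^ 2 ≤ |y ⬝ᵥ (S *ᵥ y)| := fun y =>
    (hScoer y).trans (le_abs_self _)
  have vbSinv : VB (1/δ^2) S⁻¹ := vb_inv hδ hSdet hSabs
  -- determinant of R
  haveI : Invertible A := A.invertibleOfIsUnitDet hAdet
  have hinvOf : (⅟A : Matrix ι ι ℝ) = A⁻¹ := Matrix.invOf_eq_nonsing_inv A
  have hdetR : (Matrix.fromBlocks A Cᵀ C D).det = A.det * S.det := by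
    rw [Matrix.det_fromBlocks₁₁, hinvOf, hS]
  have hRdet : IsUnit (Matrix.fromBlocks A Cᵀ C D).det := by
    rw [hdetR]; exact hAdet.mul hSdet
  -- factorization
  have hfact : Matrix.fromBlocks A Cᵀ C D =
      Matrix.fromBlocks 1 0 (C * A⁻¹) 1 * Matrix.fromBlocks A 0 0 S *
        Matrix.fromBlocks 1 (A⁻¹ * Cᵀ) 0 1 := by
    have := Matrix.fromBlocks_eq_of_invertible₁₁ A Cᵀ C D
    rwa [hinvOf, ← hS] at this
  have hZinv : (Matrix.fromBlocks (1 : Matrix ι ι ℝ) (A⁻¹ * Cᵀ) (0 : Matrix κ ι ℝ) (1 : Matrix κ κ ℝ))⁻¹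
      = Matrix.fromBlocks (1 : Matrix ι ι ℝ) (-(A⁻¹ * Cᵀ)) (0 : Matrix κ ι ℝ) (1 : Matrix κ κ ℝ) := by
    apply Matrix.inv_eq_right_inv
    simp [Matrix.fromBlocks_multiply, ← Matrix.fromBlocks_one]
  have hXinv : (Matrix.fromBlocks (1 : Matrix ι ι ℝ) (0 : Matrix ι κ ℝ) (C * A⁻¹) (1 : Matrix κ κ ℝ))⁻¹
      = Matrix.fromBlocks (1 : Matrix ι ι ℝ) (0 : Matrix ι κ ℝ) (-(C * A⁻¹)) (1 : Matrix κ κ ℝ) := by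
    apply Matrix.inv_eq_right_inv
    simp [Matrix.fromBlocks_multiply, ← Matrix.fromBlocks_one]
  have hYinv : (Matrix.fromBlocks A (0 : Matrix ι κ ℝ) (0 : Matrix κ ι ℝ) S)⁻¹ = Matrix.fromBlocks A⁻¹ (0 : Matrix ι κ ℝ) (0 : Matrix κ ι ℝ) S⁻¹ := by
    apply Matrix.inv_eq_right_inv
    rw [Matrix.fromBlocks_multiply]
    simp [Matrix.mul_nonsing_inv _ hAdet, Matrix.mul_nonsing_inv _ hSdet,
      ← Matrix.fromBlocks_one]
  have hRinv : (Matrix.fromBlocks A Cᵀ C D)⁻¹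
      = Matrix.fromBlocks (1 : Matrix ι ι ℝ) (-(A⁻¹ * Cᵀ)) (0 : Matrix κ ι ℝ) (1 : Matrix κ κ ℝ) *
        (Matrix.fromBlocks A⁻¹ (0 : Matrix ι κ ℝ) (0 : Matrix κ ι ℝ) S⁻¹ *
          Matrix.fromBlocks (1 : Matrix ι ι ℝ) (0 : Matrix ι κ ℝ) (-(C * A⁻¹)) (1 : Matrix κ κ ℝ)) := by
    rw [hfact, Matrix.mul_inv_rev, Matrix.mul_inv_rev, hZinv, hXinv, hYinv]
  -- VB bounds for factors
  have hδ2 : (0:ℝ) ≤ 1/δ^2 := by positivity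
  have hM2 : (0:ℝ) ≤ M^2 := sq_nonneg M
  have vbK : VB (1/δ^2 * M^2) (A⁻¹ * Cᵀ) := vbAinv.mul vbCt hδ2
  have vbK' : VB (M^2 * (1/δ^2)) (C * A⁻¹) := vbC.mul vbAinv hM2
  have vbZ : VB (2*(1 + (1/δ^2*M^2) + 0 + 1)) (Matrix.fromBlocks 1 (-(A⁻¹ * Cᵀ)) 0 (1 : Matrix κ κ ℝ)) :=
    VB.fromBlocks VB.one vbK.neg VB.zero VB.one zero_le_one (by positivity) le_rfl zero_le_one
  have vbX : VB (2*(1 + 0 + (M^2*(1/δ^2)) + 1)) (Matrix.fromBlocks 1 0 (-(C * A⁻¹)) (1 : Matrix κ κ ℝ)) :=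
    VB.fromBlocks VB.one VB.zero vbK'.neg VB.one zero_le_one le_rfl (by positivity) zero_le_one
  have vbY : VB (2*((1/δ^2) + 0 + 0 + (1/δ^2))) (Matrix.fromBlocks A⁻¹ 0 0 S⁻¹) :=
    VB.fromBlocks vbAinv VB.zero VB.zero vbSinv hδ2 le_rfl le_rfl hδ2
  have vbRinv : VB (CRconst δ M) (Matrix.fromBlocks A Cᵀ C D)⁻¹ := by
    rw [hRinv]
    exact vbZ.mul (vbY.mul vbX (by positivity)) (by positivity)
  exact ⟨hAdet, vbAinv, vbCt, hRdet, vbRinv⟩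

end Main

section Algebra
variable [DecidableEq ι]

lemma dot_mulVec_symm {R : Matrix ι ι ℝ} (hs : Rᵀ = R) (u v : ι → ℝ) :
    (R *ᵥ u) ⬝ᵥ v = (R *ᵥ v) ⬝ᵥ u := by
  simp_rw [dotProduct, Matrix.mulVec, dotProduct, Finset.sum_mul]
  rw [Finset.sum_comm]
  refine Finset.sum_congr rfl fun i _ => Finset.sum_congr rfl fun j _ => ?_
  have h := congrFun (congrFun hs j) i
  rw [Matrix.transpose_apply] at h
  rw [← h]; ring

lemma quad_diff {R : Matrix ι ι ℝ} (hs : Rᵀ = R) {Δ us : ι → ℝ} (h : R *ᵥ us = -Δ)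
    (v : ι → ℝ) :
    (R *ᵥ v) ⬝ᵥ v + 2 * (Δ ⬝ᵥ v) =
      (R *ᵥ (v - us)) ⬝ᵥ (v - us) + ((R *ᵥ us) ⬝ᵥ us + 2 * (Δ ⬝ᵥ us)) := by
  have e1 : R *ᵥ (v - us) = R *ᵥ v - R *ᵥ us := Matrix.mulVec_sub R v us
  have e2 : (R *ᵥ v) ⬝ᵥ us = (R *ᵥ us) ⬝ᵥ v := dot_mulVec_symm hs v us
  rw [e1, sub_dotProduct, dotProduct_sub, dotProduct_sub, e2, h]
  simp only [neg_dotProduct, dotProduct_neg]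
  ring

end Algebra

lemma dot_elim (x₁ y₁ : ι → ℝ) (x₂ y₂ : κ → ℝ) :
    Sum.elim x₁ x₂ ⬝ᵥ Sum.elim y₁ y₂ = x₁ ⬝ᵥ y₁ + x₂ ⬝ᵥ y₂ := by
  simp [dotProduct, Fintype.sum_sum_type]

lemma elim_sub (x₁ y₁ : ι → ℝ) (x₂ y₂ : κ → ℝ) :
    Sum.elim x₁ x₂ - Sum.elim y₁ y₂ = Sum.elim (x₁ - y₁) (x₂ - y₂) := by
  funext z; cases z <;> simp

section Meas
variable [DecidableEq ι] {α : Type*} [MeasurableSpace α]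

lemma measurable_det {f : α → Matrix ι ι ℝ} (h : ∀ i j, Measurable fun t => f t i j) :
    Measurable fun t => (f t).det := by
  simp_rw [Matrix.det_apply']
  exact Finset.measurable_sum _ fun σ _ =>
    (Finset.measurable_prod _ fun i _ => h _ _).const_mul _

lemma measurable_inv_entry {f : α → Matrix ι ι ℝ} (h : ∀ i j, Measurable fun t => f t i j)
    (i j : ι) : Measurable fun t => (f t)⁻¹ i j := by
  have hadj : Measurable fun t => (f t).adjugate i j := by
    simp_rw [Matrix.adjugate_apply]
    refine measurable_det fun a b => ?_
    by_cases hab : a = j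
    · simp only [Matrix.updateRow_apply, hab, if_true]
      exact measurable_const
    · simp only [Matrix.updateRow_apply, hab, if_false]
      exact h a b
  have hdet : Measurable fun t => (f t).det := measurable_det h
  simp_rw [Matrix.inv_def, Matrix.smul_apply, Ring.inverse_eq_inv', smul_eq_mul]
  exact hdet.inv.mul hadj

lemma aemeasurable_dot {μ : Measure α} {x y : α → ι → ℝ}
    (hx : ∀ i, AEMeasurable (fun t => x t i) μ) (hy : ∀ i, AEMeasurable (fun t => y t i) μ) :
    AEMeasurable (fun t => x t ⬝ᵥ y t) μ := by
  simp_rw [dotProduct]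
  exact Finset.aemeasurable_fun_sum _ fun i _ => (hx i).mul (hy i)

lemma aemeasurable_mulVec {μ : Measure α} {A : α → Matrix ι κ ℝ}
    (hA : ∀ i j, AEMeasurable (fun t => A t i j) μ) {x : α → κ → ℝ}
    (hx : ∀ j, AEMeasurable (fun t => x t j) μ) (i : ι) :
    AEMeasurable (fun t => (A t *ᵥ x t) i) μ := by
  simp_rw [Matrix.mulVec, dotProduct]
  exact Finset.aemeasurable_fun_sum _ fun j _ => (hA i j).mul (hx j)

end Meas

lemma abs_dot_le [DecidableEq ι] (x y : ι → ℝ) :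
    |x ⬝ᵥ y| ≤ Real.sqrt (∑ i, x i ^ 2) * Real.sqrt (∑ i, y i ^ 2) := by
  rw [← Real.sqrt_sq_eq_abs, ← Real.sqrt_mul (sq_sum_nonneg x)]
  exact Real.sqrt_le_sqrt (dot_sq_le x y)

lemma sq_sum_le_card_norm (v : ι → ℝ) :
    ∑ i, v i ^ 2 ≤ (Fintype.card ι : ℝ) * ‖v‖ ^ 2 := by
  classical
  calc ∑ i, v i ^ 2 ≤ ∑ _i : ι, ‖v‖ ^ 2 := by
        refine Finset.sum_le_sum fun i _ => ?_
        have h0 : |v i| ≤ ‖v‖ := by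
          simpa [Real.norm_eq_abs] using norm_le_pi_norm v i
        nlinarith [abs_nonneg (v i), sq_abs (v i)]
    _ = (Fintype.card ι : ℝ) * ‖v‖ ^ 2 := by
        simp [Finset.sum_const, nsmul_eq_mul, Finset.card_univ]

lemma abs_le_sqrt_sum (v : ι → ℝ) (i : ι) : |v i| ≤ Real.sqrt (∑ j, v j ^ 2) := by
  rw [← Real.sqrt_sq_eq_abs]
  refine Real.sqrt_le_sqrt ?_
  exact Finset.single_le_sum (f := fun j => v j ^ 2) (fun j _ => sq_nonneg _) (Finset.mem_univ i)

lemma integrable_norm_sq {α : Type*} [MeasurableSpace α] {μ : Measure α} {E : Type*}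
    [NormedAddCommGroup E] {f : α → E} (hf : MemLp f 2 μ) :
    Integrable (fun t => ‖f t‖ ^ 2) μ := by
  have h := hf.integrable_norm_rpow (by norm_num) (by norm_num)
  have : ∀ t, ‖f t‖ ^ ((2 : ENNReal).toReal) = ‖f t‖ ^ 2 := fun t => by
    rw [ENNReal.toReal_ofNat, ← Real.rpow_natCast]; norm_num
  simpa [this] using h

end Stmt17Aux



set_option maxHeartbeats 1000000 in
/-- Deterministic L² form of the saddle point property from the completion-of-squares
argument of Section 5 and Theorem 1 of the paper: if the measurable symmetric block matrix
function `R(t) = [[R₁₁(t), R₂₁(t)ᵀ],[R₂₁(t), R₂₂(t)]]` satisfies, a.e. on `[0,T]`,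
`‖R(t)‖ ≤ M`, `R₁₁(t) + δI` negative semidefinite and `S₁(t) − δI` positive semidefinite,
and `Δ ∈ L²(0,T;ℝᵏ)`, then `R(t)` is invertible a.e., `u*(t) = −R(t)⁻¹Δ(t)` is in `L²`,
and `u* = (u₁*, u₂*)` is a saddle point of
`F(u₁,u₂) = ∫₀ᵀ (⟨R(t)u(t), u(t)⟩ + 2⟨Δ(t), u(t)⟩) dt` over `L²` controls, with value
`F(u₁*, u₂*) = −∫₀ᵀ ⟨R(t)⁻¹Δ(t), Δ(t)⟩ dt`. -/
theorem stmt_17 (T δ M : ℝ) (hT : 0 < T) (hδ : 0 < δ) (hM : 0 < M)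
    (k₁ k₂ : ℕ) (hk₁ : 0 < k₁) (hk₂ : 0 < k₂)
    (R₁₁ : ℝ → Matrix (Fin k₁) (Fin k₁) ℝ)
    (R₂₂ : ℝ → Matrix (Fin k₂) (Fin k₂) ℝ)
    (R₂₁ : ℝ → Matrix (Fin k₂) (Fin k₁) ℝ)
    (hmeas₁₁ : ∀ i j, Measurable (fun t => R₁₁ t i j))
    (hmeas₂₂ : ∀ i j, Measurable (fun t => R₂₂ t i j))
    (hmeas₂₁ : ∀ i j, Measurable (fun t => R₂₁ t i j))
    (R : ℝ → Matrix (Fin k₁ ⊕ Fin k₂) (Fin k₁ ⊕ Fin k₂) ℝ)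
    (hR : ∀ t, R t = Matrix.fromBlocks (R₁₁ t) (R₂₁ t)ᵀ (R₂₁ t) (R₂₂ t))
    (hsymm : ∀ᵐ t ∂(volume.restrict (Set.Icc (0 : ℝ) T)),
      (R₁₁ t).IsSymm ∧ (R₂₂ t).IsSymm)
    (hbound : ∀ᵐ t ∂(volume.restrict (Set.Icc (0 : ℝ) T)), ‖R t‖ ≤ M)
    (hneg : ∀ᵐ t ∂(volume.restrict (Set.Icc (0 : ℝ) T)),
      (-(R₁₁ t + δ • (1 : Matrix (Fin k₁) (Fin k₁) ℝ))).PosSemidef)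
    (hpos : ∀ᵐ t ∂(volume.restrict (Set.Icc (0 : ℝ) T)),
      ((R₂₂ t - R₂₁ t * (R₁₁ t)⁻¹ * (R₂₁ t)ᵀ)
        - δ • (1 : Matrix (Fin k₂) (Fin k₂) ℝ)).PosSemidef)
    (Δ₁ : ℝ → (Fin k₁ → ℝ)) (Δ₂ : ℝ → (Fin k₂ → ℝ))
    (Δ : ℝ → (Fin k₁ ⊕ Fin k₂ → ℝ)) (hΔ : ∀ t, Δ t = Sum.elim (Δ₁ t) (Δ₂ t))
    (hΔL2 : MemLp Δ 2 (volume.restrict (Set.Icc (0 : ℝ) T)))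
    (F : (ℝ → (Fin k₁ → ℝ)) → (ℝ → (Fin k₂ → ℝ)) → ℝ)
    (hF : ∀ u₁ u₂, F u₁ u₂ = ∫ t in Set.Icc (0 : ℝ) T,
      ((R t).mulVec (Sum.elim (u₁ t) (u₂ t)) ⬝ᵥ Sum.elim (u₁ t) (u₂ t)
        + 2 * (Δ t ⬝ᵥ Sum.elim (u₁ t) (u₂ t))))
    (ustar : ℝ → (Fin k₁ ⊕ Fin k₂ → ℝ)) (hustar : ∀ t, ustar t = -((R t)⁻¹.mulVec (Δ t)))
    (u₁star : ℝ → (Fin k₁ → ℝ)) (hu₁star : ∀ t, u₁star t = ustar t ∘ Sum.inl)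
    (u₂star : ℝ → (Fin k₂ → ℝ)) (hu₂star : ∀ t, u₂star t = ustar t ∘ Sum.inr) :
    (∀ᵐ t ∂(volume.restrict (Set.Icc (0 : ℝ) T)), IsUnit (R t))
    ∧ MemLp ustar 2 (volume.restrict (Set.Icc (0 : ℝ) T))
    ∧ (∀ (u₁ : ℝ → (Fin k₁ → ℝ)) (u₂ : ℝ → (Fin k₂ → ℝ)),
        MemLp u₁ 2 (volume.restrict (Set.Icc (0 : ℝ) T)) →
        MemLp u₂ 2 (volume.restrict (Set.Icc (0 : ℝ) T)) →
        F u₁ u₂star ≤ F u₁star u₂star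
        ∧ F u₁star u₂star
            ≤ F (fun t => -((R₁₁ t)⁻¹.mulVec ((R₂₁ t)ᵀ.mulVec (u₂ t) + Δ₁ t))) u₂)
    ∧ F u₁star u₂star = -∫ t in Set.Icc (0 : ℝ) T, (R t)⁻¹.mulVec (Δ t) ⬝ᵥ Δ t := by
  classical
  set μ := volume.restrict (Set.Icc (0 : ℝ) T) with hμdef
  -- entries of R are measurable
  have hRmeas : ∀ i j, Measurable fun t => R t i j := by
    intro i j
    cases i with
    | inl a =>
      cases j with
      | inl b => simpa [hR] using hmeas₁₁ a b
      | inr b => simpa [hR] using hmeas₂₁ b a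
    | inr a =>
      cases j with
      | inl b => simpa [hR] using hmeas₂₁ a b
      | inr b => simpa [hR] using hmeas₂₂ a b
  have hRinvmeas : ∀ i j, Measurable fun t => (R t)⁻¹ i j :=
    Stmt17Aux.measurable_inv_entry hRmeas
  have hR11invmeas : ∀ i j, Measurable fun t => (R₁₁ t)⁻¹ i j :=
    Stmt17Aux.measurable_inv_entry hmeas₁₁
  have hΔaem : ∀ i, AEMeasurable (fun t => Δ t i) μ := fun i =>
    (measurable_pi_apply i).comp_aemeasurable hΔL2.aestronglyMeasurable.aemeasurable
  -- master pointwise package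
  have hmaster : ∀ᵐ t ∂μ,
      IsUnit (R t).det ∧ Stmt17Aux.VB (1/δ^2) (R₁₁ t)⁻¹ ∧ Stmt17Aux.VB (M^2) (R₂₁ t)ᵀ
      ∧ Stmt17Aux.VB (Stmt17Aux.CRconst δ M) (R t)⁻¹ ∧ Stmt17Aux.VB (M^2) (R t)
      ∧ (∀ x : Fin k₁ → ℝ, x ⬝ᵥ (R₁₁ t *ᵥ x) ≤ -(δ * ∑ i, x i ^ 2))
      ∧ (∀ x : Fin k₂ → ℝ, δ * ∑ i, x i ^ 2
          ≤ x ⬝ᵥ ((R₂₂ t - R₂₁ t * (R₁₁ t)⁻¹ * (R₂₁ t)ᵀ) *ᵥ x))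
      ∧ (R t)ᵀ = R t ∧ IsUnit (R₁₁ t).det := by
    filter_upwards [hsymm, hbound, hneg, hpos] with t hs hb hn hp
    have vbR : Stmt17Aux.VB (M^2) (R t) := Stmt17Aux.vb_of_opNorm_le hb hM.le
    have vbR' : Stmt17Aux.VB (M^2) (Matrix.fromBlocks (R₁₁ t) (R₂₁ t)ᵀ (R₂₁ t) (R₂₂ t)) := by
      rw [← hR t]; exact vbR
    obtain ⟨hAdet, vbAinv, vbCt, hRdet, vbRinv⟩ :=
      Stmt17Aux.pointwise_main hδ hM hn hp vbR'
    have hnegA : ∀ x : Fin k₁ → ℝ, x ⬝ᵥ (R₁₁ t *ᵥ x) ≤ -(δ * ∑ i, x i ^ 2) := by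
      intro x
      have h1 : ((-(R₁₁ t)) - δ • (1 : Matrix (Fin k₁) (Fin k₁) ℝ)).PosSemidef := by
        have e : (-(R₁₁ t)) - δ • (1 : Matrix (Fin k₁) (Fin k₁) ℝ)
            = -(R₁₁ t + δ • 1) := by abel
        rw [e]; exact hn
      have h2 := Stmt17Aux.coercive_of_shift h1 x
      rw [Matrix.neg_mulVec, dotProduct_neg] at h2
      linarith
    have hScoer := Stmt17Aux.coercive_of_shift hp
    have hsymmR : (R t)ᵀ = R t := by
      rw [hR t, Matrix.fromBlocks_transpose, Matrix.transpose_transpose, hs.1, hs.2]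
    refine ⟨?_, vbAinv, vbCt, ?_, vbR, hnegA, hScoer, hsymmR, hAdet⟩
    · rw [hR t]; exact hRdet
    · rw [hR t]; exact vbRinv
  
  have elimstar : ∀ t, Sum.elim (u₁star t) (u₂star t) = ustar t := fun t => by
    rw [hu₁star t, hu₂star t]; exact Sum.elim_comp_inl_inr (ustar t)
  have hRu : ∀ᵐ t ∂μ, R t *ᵥ ustar t = -(Δ t) := by
    filter_upwards [hmaster] with t ht
    rw [hustar t, Matrix.mulVec_neg, Matrix.mulVec_mulVec, Matrix.mul_nonsing_inv _ ht.1,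
      Matrix.one_mulVec]
  have part1 : ∀ᵐ t ∂μ, IsUnit (R t) := by
    filter_upwards [hmaster] with t ht
    exact (Matrix.isUnit_iff_isUnit_det _).mpr ht.1
  obtain ⟨g, hgsm, hΔg⟩ := hΔL2.aestronglyMeasurable
  have hgmeas : Measurable g := hgsm.measurable
  have hrepcomp : ∀ i, Measurable fun t => ((R t)⁻¹ *ᵥ g t) i := by
    intro i
    simp_rw [Matrix.mulVec, dotProduct]
    exact Finset.measurable_sum _ fun j _ =>
      (hRinvmeas i j).mul ((measurable_pi_apply j).comp hgmeas)
  have hrep : Measurable fun t => -((R t)⁻¹ *ᵥ g t) :=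
    (measurable_pi_iff.mpr hrepcomp).neg
  have hustar_aesm : AEStronglyMeasurable ustar μ := by
    refine hrep.aestronglyMeasurable.congr ?_
    filter_upwards [hΔg] with t ht
    rw [hustar t, ht]
  have hk : (Fintype.card (Fin k₁ ⊕ Fin k₂) : ℝ) = ((k₁ : ℝ) + (k₂ : ℝ)) := by simp
  have hCR : 0 ≤ Stmt17Aux.CRconst δ M := by
    unfold Stmt17Aux.CRconst; positivity
  set c := Real.sqrt (Stmt17Aux.CRconst δ M * ((k₁ : ℝ) + (k₂ : ℝ))) with hc
  have part2 : MemLp ustar 2 μ := by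
    refine MemLp.of_le_mul (c := c) hΔL2 hustar_aesm ?_
    filter_upwards [hmaster] with t ht
    have hbd : ∀ i, |ustar t i| ≤ c * ‖Δ t‖ := by
      intro i
      have h1 : ∑ j, ((R t)⁻¹ *ᵥ Δ t) j ^ 2
          ≤ Stmt17Aux.CRconst δ M * ∑ j, Δ t j ^ 2 := ht.2.2.2.1 _
      have h2 : ∑ j, Δ t j ^ 2 ≤ ((k₁ : ℝ) + (k₂ : ℝ)) * ‖Δ t‖ ^ 2 := by
        have h := Stmt17Aux.sq_sum_le_card_norm (Δ t); rwa [hk] at h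
      have h3 : |ustar t i| ≤ Real.sqrt (∑ j, ((R t)⁻¹ *ᵥ Δ t) j ^ 2) := by
        rw [hustar t]
        have h := Stmt17Aux.abs_le_sqrt_sum ((R t)⁻¹ *ᵥ Δ t) i
        simpa [abs_neg] using h
      refine h3.trans ?_
      rw [hc]
      have h4 : ∑ j, ((R t)⁻¹ *ᵥ Δ t) j ^ 2
          ≤ Stmt17Aux.CRconst δ M * ((k₁ : ℝ) + (k₂ : ℝ)) * ‖Δ t‖ ^ 2 := by nlinarith
      calc Real.sqrt (∑ j, ((R t)⁻¹ *ᵥ Δ t) j ^ 2)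
          ≤ Real.sqrt (Stmt17Aux.CRconst δ M * ((k₁ : ℝ) + (k₂ : ℝ)) * ‖Δ t‖ ^ 2) :=
            Real.sqrt_le_sqrt h4
        _ = Real.sqrt (Stmt17Aux.CRconst δ M * ((k₁ : ℝ) + (k₂ : ℝ))) * ‖Δ t‖ := by
            rw [Real.sqrt_mul (by positivity), Real.sqrt_sq_eq_abs,
              abs_of_nonneg (norm_nonneg _)]
    have hcn : (0:ℝ) ≤ c * ‖Δ t‖ := by
      have : (0:ℝ) ≤ c := Real.sqrt_nonneg _
      positivity
    rw [show ‖ustar t‖ = ‖(ustar t : Fin k₁ ⊕ Fin k₂ → ℝ)‖ from rfl]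
    refine (pi_norm_le_iff_of_nonneg hcn).mpr fun i => ?_
    simpa [Real.norm_eq_abs] using hbd i
  have hu₁s_aesm : AEStronglyMeasurable u₁star μ := by
    have hm : Measurable fun t => (fun i => (-((R t)⁻¹ *ᵥ g t)) (Sum.inl i) : Fin k₁ → ℝ) :=
      measurable_pi_iff.mpr fun i => (hrepcomp (Sum.inl i)).neg
    refine hm.aestronglyMeasurable.congr ?_
    filter_upwards [hΔg] with t ht
    rw [hu₁star t, hustar t, ht]
    rfl
  have hu₂s_aesm : AEStronglyMeasurable u₂star μ := by
    have hm : Measurable fun t => (fun i => (-((R t)⁻¹ *ᵥ g t)) (Sum.inr i) : Fin k₂ → ℝ) :=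
      measurable_pi_iff.mpr fun i => (hrepcomp (Sum.inr i)).neg
    refine hm.aestronglyMeasurable.congr ?_
    filter_upwards [hΔg] with t ht
    rw [hu₂star t, hustar t, ht]
    rfl
  have hu₁sL2 : MemLp u₁star 2 μ := by
    refine part2.of_le hu₁s_aesm (Filter.Eventually.of_forall fun t => ?_)
    refine (pi_norm_le_iff_of_nonneg (norm_nonneg _)).mpr fun i => ?_
    rw [hu₁star t]
    exact norm_le_pi_norm (ustar t) (Sum.inl i)
  have hu₂sL2 : MemLp u₂star 2 μ := by
    refine part2.of_le hu₂s_aesm (Filter.Eventually.of_forall fun t => ?_)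
    refine (pi_norm_le_iff_of_nonneg (norm_nonneg _)).mpr fun i => ?_
    rw [hu₂star t]
    exact norm_le_pi_norm (ustar t) (Sum.inr i)
  
  have hints : ∀ (v₁ : ℝ → Fin k₁ → ℝ) (v₂ : ℝ → Fin k₂ → ℝ), MemLp v₁ 2 μ → MemLp v₂ 2 μ →
      Integrable (fun t => (R t *ᵥ Sum.elim (v₁ t) (v₂ t)) ⬝ᵥ Sum.elim (v₁ t) (v₂ t)
        + 2 * (Δ t ⬝ᵥ Sum.elim (v₁ t) (v₂ t))) μ := by
    intro v₁ v₂ hv₁ hv₂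
    have hv₁c : ∀ i, AEMeasurable (fun t => v₁ t i) μ := fun i =>
      (measurable_pi_apply i).comp_aemeasurable hv₁.aestronglyMeasurable.aemeasurable
    have hv₂c : ∀ i, AEMeasurable (fun t => v₂ t i) μ := fun i =>
      (measurable_pi_apply i).comp_aemeasurable hv₂.aestronglyMeasurable.aemeasurable
    have hvc : ∀ i, AEMeasurable (fun t => Sum.elim (v₁ t) (v₂ t) i) μ := by
      intro i
      cases i with
      | inl a => exact hv₁c a
      | inr a => exact hv₂c a
    have haesm : AEStronglyMeasurable (fun t =>
        (R t *ᵥ Sum.elim (v₁ t) (v₂ t)) ⬝ᵥ Sum.elim (v₁ t) (v₂ t)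
          + 2 * (Δ t ⬝ᵥ Sum.elim (v₁ t) (v₂ t))) μ := by
      have h1 : AEMeasurable
          (fun t => (R t *ᵥ Sum.elim (v₁ t) (v₂ t)) ⬝ᵥ Sum.elim (v₁ t) (v₂ t)) μ :=
        Stmt17Aux.aemeasurable_dot (fun i => Stmt17Aux.aemeasurable_mulVec
          (fun i j => (hRmeas i j).aemeasurable) hvc i) hvc
      have h2 : AEMeasurable (fun t => Δ t ⬝ᵥ Sum.elim (v₁ t) (v₂ t)) μ :=
        Stmt17Aux.aemeasurable_dot hΔaem hvc
      exact (h1.add (h2.const_mul 2)).aestronglyMeasurable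
    refine Integrable.mono' (g := fun t =>
        (M+1) * ((k₁:ℝ) * ‖v₁ t‖^2 + (k₂:ℝ) * ‖v₂ t‖^2)
          + ((k₁:ℝ) + (k₂:ℝ)) * ‖Δ t‖^2) ?_ haesm ?_
    · exact (((((Stmt17Aux.integrable_norm_sq hv₁).const_mul _).add
        ((Stmt17Aux.integrable_norm_sq hv₂).const_mul _)).const_mul _)).add
        ((Stmt17Aux.integrable_norm_sq hΔL2).const_mul _)
    · filter_upwards [hmaster] with t ht
      set v := Sum.elim (v₁ t) (v₂ t) with hv
      have hsv : ∑ i, v i ^ 2 = (∑ i, v₁ t i ^ 2) + ∑ i, v₂ t i ^ 2 := by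
        rw [hv, Fintype.sum_sum_type]
        simp
      have hs1 : ∑ i, v₁ t i ^ 2 ≤ (k₁:ℝ) * ‖v₁ t‖^2 := by
        simpa using Stmt17Aux.sq_sum_le_card_norm (v₁ t)
      have hs2 : ∑ i, v₂ t i ^ 2 ≤ (k₂:ℝ) * ‖v₂ t‖^2 := by
        simpa using Stmt17Aux.sq_sum_le_card_norm (v₂ t)
      have hd : ∑ i, Δ t i ^ 2 ≤ ((k₁:ℝ)+(k₂:ℝ)) * ‖Δ t‖^2 := by
        have h := Stmt17Aux.sq_sum_le_card_norm (Δ t); rwa [hk] at h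
      have hR2 : ∑ i, (R t *ᵥ v) i ^ 2 ≤ M^2 * ∑ i, v i ^ 2 := ht.2.2.2.2.1 v
      have hnn : (0:ℝ) ≤ ∑ i, v i ^ 2 := Stmt17Aux.sq_sum_nonneg v
      have h1 : |(R t *ᵥ v) ⬝ᵥ v| ≤ M * ∑ i, v i ^ 2 := by
        have ha := Stmt17Aux.abs_dot_le (R t *ᵥ v) v
        have hb2 : Real.sqrt (∑ i, (R t *ᵥ v) i ^ 2) ≤ M * Real.sqrt (∑ i, v i ^ 2) := by
          rw [show M * Real.sqrt (∑ i, v i ^ 2) = Real.sqrt (M^2 * ∑ i, v i ^ 2) by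
            rw [Real.sqrt_mul (by positivity), Real.sqrt_sq hM.le]]
          exact Real.sqrt_le_sqrt hR2
        calc |(R t *ᵥ v) ⬝ᵥ v| ≤ _ := ha
          _ ≤ (M * Real.sqrt (∑ i, v i ^ 2)) * Real.sqrt (∑ i, v i ^ 2) :=
            mul_le_mul_of_nonneg_right hb2 (Real.sqrt_nonneg _)
          _ = M * ∑ i, v i ^ 2 := by
            rw [mul_assoc, Real.mul_self_sqrt hnn]
      have h2 : |Δ t ⬝ᵥ v| ≤ (∑ i, Δ t i ^ 2 + ∑ i, v i ^ 2) / 2 := by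
        have ha := Stmt17Aux.abs_dot_le (Δ t) v
        nlinarith [Real.sq_sqrt (Stmt17Aux.sq_sum_nonneg (Δ t)),
          Real.sq_sqrt hnn,
          sq_nonneg (Real.sqrt (∑ i, Δ t i ^ 2) - Real.sqrt (∑ i, v i ^ 2)),
          Real.sqrt_nonneg (∑ i, Δ t i ^ 2), Real.sqrt_nonneg (∑ i, v i ^ 2)]
      have habs : |(R t *ᵥ v) ⬝ᵥ v + 2 * (Δ t ⬝ᵥ v)|
          ≤ M * ∑ i, v i ^ 2 + (∑ i, Δ t i ^ 2 + ∑ i, v i ^ 2) := by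
        have h3 := abs_add_le ((R t *ᵥ v) ⬝ᵥ v) (2 * (Δ t ⬝ᵥ v))
        have h4 : |2 * (Δ t ⬝ᵥ v)| = 2 * |Δ t ⬝ᵥ v| := by
          rw [abs_mul]; norm_num
        linarith
      rw [Real.norm_eq_abs]
      have hs' : ∑ i, v i ^ 2 ≤ (k₁:ℝ)*‖v₁ t‖^2 + (k₂:ℝ)*‖v₂ t‖^2 := by
        rw [hsv]; linarith
      have hM1 : (0:ℝ) ≤ M + 1 := by linarith
      nlinarith [mul_nonneg hM1 (sub_nonneg.mpr hs')]
  have part4 : F u₁star u₂star = -∫ t in Set.Icc (0:ℝ) T, (R t)⁻¹ *ᵥ Δ t ⬝ᵥ Δ t := by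
    rw [hF]
    have hcong : (fun t =>
        (R t *ᵥ Sum.elim (u₁star t) (u₂star t)) ⬝ᵥ Sum.elim (u₁star t) (u₂star t)
          + 2 * (Δ t ⬝ᵥ Sum.elim (u₁star t) (u₂star t)))
        =ᵐ[μ] fun t => -((R t)⁻¹ *ᵥ Δ t ⬝ᵥ Δ t) := by
      filter_upwards [hRu] with t ht
      rw [elimstar t, ht, hustar t]
      simp only [neg_dotProduct, dotProduct_neg, neg_neg]
      rw [dotProduct_comm ((R t)⁻¹ *ᵥ Δ t) (Δ t)]
      ring
    rw [integral_congr_ae hcong, integral_neg]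
  refine ⟨part1, part2, fun u₁ u₂ hu₁ hu₂ => ⟨?_, ?_⟩, part4⟩
  · -- F u₁ u₂star ≤ F u₁star u₂star
    rw [hF, hF]
    refine integral_mono_ae (hints u₁ u₂star hu₁ hu₂sL2) (hints u₁star u₂star hu₁sL2 hu₂sL2) ?_
    filter_upwards [hmaster, hRu] with t ht hru
    have hq := Stmt17Aux.quad_diff ht.2.2.2.2.2.2.2.1 hru (Sum.elim (u₁ t) (u₂star t))
    rw [elimstar t]
    rw [hq]
    have hw : Sum.elim (u₁ t) (u₂star t) - ustar t
        = Sum.elim (u₁ t - u₁star t) (0 : Fin k₂ → ℝ) := by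
      rw [← elimstar t, Stmt17Aux.elim_sub, sub_self]
    rw [hw]
    have hquad : (R t *ᵥ Sum.elim (u₁ t - u₁star t) (0 : Fin k₂ → ℝ))
        ⬝ᵥ Sum.elim (u₁ t - u₁star t) (0 : Fin k₂ → ℝ) ≤ 0 := by
      rw [hR t, Matrix.fromBlocks_mulVec, Stmt17Aux.dot_elim]
      simp only [Sum.elim_comp_inl, Sum.elim_comp_inr, Matrix.mulVec_zero, add_zero,
        dotProduct_zero]
      have h5 := ht.2.2.2.2.2.1 (u₁ t - u₁star t)
      have h6 : (R₁₁ t *ᵥ (u₁ t - u₁star t)) ⬝ᵥ (u₁ t - u₁star t)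
          = (u₁ t - u₁star t) ⬝ᵥ (R₁₁ t *ᵥ (u₁ t - u₁star t)) := dotProduct_comm _ _
      have h7 : (0:ℝ) ≤ δ * ∑ i, (u₁ t - u₁star t) i ^ 2 := by
        have := Stmt17Aux.sq_sum_nonneg (u₁ t - u₁star t)
        positivity
      linarith
    linarith
  · -- second inequality
    set uu : ℝ → Fin k₁ → ℝ := fun s => -((R₁₁ s)⁻¹ *ᵥ ((R₂₁ s)ᵀ *ᵥ u₂ s + Δ₁ s)) with huudef
    obtain ⟨g₂, hg₂sm, hu₂g⟩ := hu₂.aestronglyMeasurable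
    have hg₂ : Measurable g₂ := hg₂sm.measurable
    set zrep : ℝ → Fin k₁ → ℝ :=
      fun t => (R₂₁ t)ᵀ *ᵥ g₂ t + (fun i => g t (Sum.inl i)) with hzrep
    have hzc : ∀ j, Measurable fun t => zrep t j := by
      intro j
      have h1 : Measurable fun t => ((R₂₁ t)ᵀ *ᵥ g₂ t) j := by
        simp_rw [Matrix.mulVec, dotProduct, Matrix.transpose_apply]
        exact Finset.measurable_sum _ fun l _ =>
          (hmeas₂₁ l j).mul ((measurable_pi_apply l).comp hg₂)
      have h2 : Measurable fun t => g t (Sum.inl j) := (measurable_pi_apply _).comp hgmeas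
      have he : (fun t => zrep t j) = fun t => ((R₂₁ t)ᵀ *ᵥ g₂ t) j + g t (Sum.inl j) := rfl
      rw [he]; exact h1.add h2
    have huuaesm : AEStronglyMeasurable uu μ := by
      have hm : Measurable fun t => -((R₁₁ t)⁻¹ *ᵥ zrep t) := by
        refine Measurable.neg (measurable_pi_iff.mpr fun i => ?_)
        simp_rw [Matrix.mulVec, dotProduct]
        exact Finset.measurable_sum _ fun j _ => (hR11invmeas i j).mul (hzc j)
      refine hm.aestronglyMeasurable.congr ?_
      filter_upwards [hΔg, hu₂g] with t h1 h2
      have hΔ₁ : Δ₁ t = fun i => g t (Sum.inl i) := by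
        funext i
        rw [← h1, hΔ t]
        rfl
      show -((R₁₁ t)⁻¹ *ᵥ zrep t) = -((R₁₁ t)⁻¹ *ᵥ ((R₂₁ t)ᵀ *ᵥ u₂ t + Δ₁ t))
      rw [hΔ₁, h2]
    have hgn : MemLp (fun t => ‖u₂ t‖ + ‖Δ t‖) 2 μ := hu₂.norm.add hΔL2.norm
    set c₂ := Real.sqrt ((2*M^2*(k₂:ℝ) + 2*((k₁:ℝ)+(k₂:ℝ))) / δ^2) with hc₂
    have huuL2 : MemLp uu 2 μ := by
      refine MemLp.of_le_mul (c := c₂) hgn huuaesm ?_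
      filter_upwards [hmaster] with t ht
      have hvbA := ht.2.1
      have hvbCt := ht.2.2.1
      set z := (R₂₁ t)ᵀ *ᵥ u₂ t + Δ₁ t with hz
      have hsu₂ : ∑ i, u₂ t i ^ 2 ≤ (k₂:ℝ) * ‖u₂ t‖^2 := by
        simpa using Stmt17Aux.sq_sum_le_card_norm (u₂ t)
      have hsΔ : ∑ i, Δ t i ^ 2 ≤ ((k₁:ℝ)+(k₂:ℝ)) * ‖Δ t‖^2 := by
        have h := Stmt17Aux.sq_sum_le_card_norm (Δ t); rwa [hk] at h
      have hΔ₁sum : ∑ i, Δ₁ t i ^ 2 ≤ ∑ i, Δ t i ^ 2 := by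
        rw [hΔ t, Fintype.sum_sum_type]
        have h9 : (0:ℝ) ≤ ∑ i, Δ₂ t i ^ 2 := Stmt17Aux.sq_sum_nonneg _
        simp only [Sum.elim_inl, Sum.elim_inr]
        linarith
      have hz2 : ∑ i, z i ^ 2 ≤ 2*(M^2 * ∑ i, u₂ t i ^ 2) + 2*∑ i, Δ₁ t i ^ 2 := by
        have h1 : ∑ i, z i ^ 2
            ≤ 2*∑ i, ((R₂₁ t)ᵀ *ᵥ u₂ t) i ^ 2 + 2*∑ i, Δ₁ t i ^ 2 := by
          rw [hz, Finset.mul_sum, Finset.mul_sum, ← Finset.sum_add_distrib]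
          refine Finset.sum_le_sum fun i _ => ?_
          simp only [Pi.add_apply]
          nlinarith [sq_nonneg (((R₂₁ t)ᵀ *ᵥ u₂ t) i - Δ₁ t i)]
        have h2 := hvbCt (u₂ t)
        linarith
      have hab : (0:ℝ) ≤ ‖u₂ t‖ := norm_nonneg _
      have hab2 : (0:ℝ) ≤ ‖Δ t‖ := norm_nonneg _
      have ha2 : ‖u₂ t‖^2 ≤ (‖u₂ t‖ + ‖Δ t‖)^2 := by nlinarith
      have hb2 : ‖Δ t‖^2 ≤ (‖u₂ t‖ + ‖Δ t‖)^2 := by nlinarith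
      have hz3 : ∑ i, z i ^ 2
          ≤ (2*M^2*(k₂:ℝ) + 2*((k₁:ℝ)+(k₂:ℝ))) * (‖u₂ t‖ + ‖Δ t‖)^2 := by
        have e1 : 2*M^2*(∑ i, u₂ t i ^ 2) ≤ 2*M^2*((k₂:ℝ)*‖u₂ t‖^2) :=
          mul_le_mul_of_nonneg_left hsu₂ (by positivity)
        have e2 : 2*M^2*((k₂:ℝ)*‖u₂ t‖^2) ≤ 2*M^2*((k₂:ℝ)*(‖u₂ t‖+‖Δ t‖)^2) :=
          mul_le_mul_of_nonneg_left (mul_le_mul_of_nonneg_left ha2 (by positivity))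
            (by positivity)
        have e3 : ∑ i, Δ t i ^ 2 ≤ ((k₁:ℝ)+(k₂:ℝ))*(‖u₂ t‖+‖Δ t‖)^2 :=
          hsΔ.trans (mul_le_mul_of_nonneg_left hb2 (by positivity))
        nlinarith
      have huusum : ∑ i, uu t i ^ 2 ≤ c₂^2 * (‖u₂ t‖ + ‖Δ t‖)^2 := by
        have h3 := hvbA z
        have hc₂sq : c₂^2 = (2*M^2*(k₂:ℝ) + 2*((k₁:ℝ)+(k₂:ℝ))) / δ^2 :=
          Real.sq_sqrt (by positivity)
        have huueq : ∑ i, uu t i ^ 2 = ∑ i, ((R₁₁ t)⁻¹ *ᵥ z) i ^ 2 := by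
          refine Finset.sum_congr rfl fun i _ => ?_
          rw [huudef]
          simp [hz]
        rw [huueq, hc₂sq]
        calc ∑ i, ((R₁₁ t)⁻¹ *ᵥ z) i ^ 2 ≤ (1/δ^2) * ∑ i, z i ^ 2 := h3
          _ ≤ (1/δ^2) * ((2*M^2*(k₂:ℝ) + 2*((k₁:ℝ)+(k₂:ℝ))) * (‖u₂ t‖ + ‖Δ t‖)^2) :=
            mul_le_mul_of_nonneg_left hz3 (by positivity)
          _ = (2*M^2*(k₂:ℝ) + 2*((k₁:ℝ)+(k₂:ℝ))) / δ^2 * (‖u₂ t‖ + ‖Δ t‖)^2 := by ring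
      have hbd : ∀ i, |uu t i| ≤ c₂ * (‖u₂ t‖ + ‖Δ t‖) := by
        intro i
        refine (Stmt17Aux.abs_le_sqrt_sum (uu t) i).trans ?_
        refine (Real.sqrt_le_sqrt huusum).trans (le_of_eq ?_)
        rw [Real.sqrt_mul (sq_nonneg _), Real.sqrt_sq_eq_abs, Real.sqrt_sq_eq_abs,
          abs_of_nonneg (Real.sqrt_nonneg _), abs_of_nonneg (by positivity)]
      have hnng : (0:ℝ) ≤ c₂ * (‖u₂ t‖ + ‖Δ t‖) := by
        have : (0:ℝ) ≤ c₂ := Real.sqrt_nonneg _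
        positivity
      rw [Real.norm_eq_abs (‖u₂ t‖ + ‖Δ t‖), abs_of_nonneg (by positivity)]
      refine (pi_norm_le_iff_of_nonneg hnng).mpr fun i => ?_
      simpa [Real.norm_eq_abs] using hbd i
    rw [hF, hF]
    refine integral_mono_ae (hints u₁star u₂star hu₁sL2 hu₂sL2) (hints uu u₂ huuL2 hu₂) ?_
    filter_upwards [hmaster, hRu] with t ht hru
    have hq := Stmt17Aux.quad_diff ht.2.2.2.2.2.2.2.1 hru (Sum.elim (uu t) (u₂ t))
    rw [elimstar t, hq]
    have hAdet := ht.2.2.2.2.2.2.2.2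
    set b := u₂ t - u₂star t with hb
    set a := uu t - u₁star t with ha0
    have hR11us : R₁₁ t *ᵥ u₁star t + (R₂₁ t)ᵀ *ᵥ u₂star t = -(Δ₁ t) := by
      have h0 := hru
      rw [← elimstar t, hR t, Matrix.fromBlocks_mulVec, hΔ t] at h0
      simp only [Sum.elim_comp_inl, Sum.elim_comp_inr] at h0
      funext i
      have hi := congrFun h0 (Sum.inl i)
      simpa using hi
    have hR11uu : R₁₁ t *ᵥ uu t = -((R₂₁ t)ᵀ *ᵥ u₂ t + Δ₁ t) := by
      show R₁₁ t *ᵥ (-((R₁₁ t)⁻¹ *ᵥ ((R₂₁ t)ᵀ *ᵥ u₂ t + Δ₁ t))) = _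
      rw [Matrix.mulVec_neg, Matrix.mulVec_mulVec, Matrix.mul_nonsing_inv _ hAdet,
        Matrix.one_mulVec]
    have hRa : R₁₁ t *ᵥ a = -((R₂₁ t)ᵀ *ᵥ b) := by
      rw [ha0, Matrix.mulVec_sub, hR11uu, eq_sub_of_add_eq hR11us, hb, Matrix.mulVec_sub]
      abel
    have haexp : a = -((R₁₁ t)⁻¹ *ᵥ ((R₂₁ t)ᵀ *ᵥ b)) := by
      have h5 : (R₁₁ t)⁻¹ *ᵥ (R₁₁ t *ᵥ a) = a := by
        rw [Matrix.mulVec_mulVec, Matrix.nonsing_inv_mul _ hAdet, Matrix.one_mulVec]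
      rw [← h5, hRa, Matrix.mulVec_neg]
    have hw : Sum.elim (uu t) (u₂ t) - ustar t = Sum.elim a b := by
      rw [← elimstar t, Stmt17Aux.elim_sub, ← ha0, ← hb]
    rw [hw]
    have hquad : 0 ≤ (R t *ᵥ Sum.elim a b) ⬝ᵥ Sum.elim a b := by
      rw [hR t, Matrix.fromBlocks_mulVec, Stmt17Aux.dot_elim]
      simp only [Sum.elim_comp_inl, Sum.elim_comp_inr]
      rw [hRa]
      have hzero : -((R₂₁ t)ᵀ *ᵥ b) + (R₂₁ t)ᵀ *ᵥ b = (0 : Fin k₁ → ℝ) := by abel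
      rw [hzero, zero_dotProduct, zero_add]
      have hsec : R₂₁ t *ᵥ a + R₂₂ t *ᵥ b
          = (R₂₂ t - R₂₁ t * (R₁₁ t)⁻¹ * (R₂₁ t)ᵀ) *ᵥ b := by
        rw [haexp, Matrix.mulVec_neg, Matrix.mulVec_mulVec, Matrix.mulVec_mulVec,
          Matrix.sub_mulVec]
        abel
      rw [hsec]
      have h6 := ht.2.2.2.2.2.2.1 b
      have h7 : ((R₂₂ t - R₂₁ t * (R₁₁ t)⁻¹ * (R₂₁ t)ᵀ) *ᵥ b) ⬝ᵥ b
          = b ⬝ᵥ ((R₂₂ t - R₂₁ t * (R₁₁ t)⁻¹ * (R₂₁ t)ᵀ) *ᵥ b) := dotProduct_comm _ _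
      have h8 : (0:ℝ) ≤ δ * ∑ i, b i ^ 2 := by
        have h9 := Stmt17Aux.sq_sum_nonneg b
        positivity
      linarith
    linarith
end
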